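/- arXiv:2101.06527 — 7 statements merged into one kernel-verified Lean document; each statement's English description precedes it below -/
import Mathlib

section
/- Let A be a multiring and α an ideal of A. Then √α equals the intersection of all prime ideals of A containing α. In particular, the intersection of all prime ideals of A equals the set of nilpotent elements of A. -/
universe u v

/-- A multiring: a commutative monoid with a multivalued addition. -/
class Multiring (A : Type u) extends CommMonoid A, Zero A, Neg A where
  /-- the multivalued sum: `madd b c` is the set `b + c` -/
  madd : A → A → Set A
  madd_nonempty : ∀ a b : A, (madd a b).Nonempty
  madd_rev_left : ∀ a b c : A, a ∈ madd b c → c ∈ madd (-b) a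
  madd_rev_right : ∀ a b c : A, a ∈ madd b c → b ∈ madd a (-c)
  mem_madd_zero : ∀ a b : A, a ∈ madd b 0 ↔ a = b
  madd_assoc : ∀ a b c g x : A, g ∈ madd a b → x ∈ madd g c →
    ∃ h ∈ madd b c, x ∈ madd a h
  madd_comm : ∀ a b : A, madd a b = madd b a
  mul_zero' : ∀ a : A, a * 0 = 0
  madd_mul : ∀ a b c d : A, a ∈ madd b c → a * d ∈ madd (b * d) (c * d)

namespace Multiring

variable {A : Type u} [Multiring A]

/-- the iterated multivalued sum `x₁ + ⋯ + xₙ = {x₁} + (x₂ + ⋯ + xₙ)` of a list -/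
def listSum : List A → Set A
  | [] => {(0 : A)}
  | a :: l => {x : A | ∃ y ∈ listSum l, x ∈ madd a y}

/-- an ideal of a multiring: a nonempty subset with `I + I ⊆ I` and `A·I ⊆ I` -/
def IsIdeal (I : Set A) : Prop :=
  I.Nonempty ∧ (∀ a ∈ I, ∀ b ∈ I, madd a b ⊆ I) ∧ ∀ a : A, ∀ b ∈ I, a * b ∈ I

/-- a prime ideal: a proper ideal such that `a*b ∈ p → a ∈ p ∨ b ∈ p` -/
def IsPrimeIdeal (I : Set A) : Prop :=
  IsIdeal I ∧ (1 : A) ∉ I ∧ ∀ a b : A, a * b ∈ I → a ∈ I ∨ b ∈ I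

/-- a maximal ideal: a proper ideal maximal among proper ideals -/
def IsMaximalIdeal (I : Set A) : Prop :=
  IsIdeal I ∧ (1 : A) ∉ I ∧ ∀ J : Set A, IsIdeal J → (1 : A) ∉ J → I ⊆ J → J = I

/-- a multiplicative subset -/
def IsMultiplicative (S : Set A) : Prop :=
  (1 : A) ∈ S ∧ ∀ s ∈ S, ∀ t ∈ S, s * t ∈ S

/-- a hyperring: a multiring with the strong distributivity property -/
def IsHyperring (A : Type u) [Multiring A] : Prop :=
  ∀ x b c d : A, x ∈ madd (b * d) (c * d) → ∃ a ∈ madd b c, x = a * d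

/-- a von Neumann (regular) hyperring -/
def IsVonNeumann (A : Type u) [Multiring A] : Prop :=
  IsHyperring A ∧ ∀ a : A, ∃ b : A, a = a * a * b

/-- the equivalence modulo an ideal `I`: `a ∼_I b` iff `(a + (-b)) ∩ I ≠ ∅`;
this is equality of classes in the quotient multiring `A/I`. -/
def simI (I : Set A) (a b : A) : Prop := ∃ x ∈ madd a (-b), x ∈ I

/-- membership of classes in the multivalued sum of the quotient `A/I`:
`[a] ∈ [b] + [c]` iff `a ∈ b + c + i` for some `i ∈ I`. -/
def qmemI (I : Set A) (a b c : A) : Prop := ∃ i ∈ I, ∃ w ∈ madd c i, a ∈ madd b w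

/-- representatives `x` with `[x] ∈ [c₁] + ⋯ + [cₙ]` in the quotient `A/I` -/
def qlistSumI (I : Set A) : List A → Set A
  | [] => {x : A | simI I x 0}
  | c :: l => {x : A | ∃ y ∈ qlistSumI I l, qmemI I x c y}

/-- the quotient multiring `A/I` is a multifield: `1 ≠ 0` and every nonzero
element is weak-invertible -/
def QuotIsMultifield (I : Set A) : Prop :=
  ¬ simI I 1 0 ∧
    ∀ a : A, ¬ simI I a 0 →
      ∃ l : List A, l ≠ [] ∧ (1 : A) ∈ qlistSumI I (l.map fun b => a * b)

/-- the quotient multiring `A/I` is a hyperfield: `1 ≠ 0` and every nonzero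
element is invertible -/
def QuotIsHyperfield (I : Set A) : Prop :=
  ¬ simI I 1 0 ∧ ∀ a : A, ¬ simI I a 0 → ∃ b : A, simI I (a * b) 1

/-- the Marshall equivalence associated to a multiplicative set `S`:
`a ∼_S b` iff `as = bt` for some `s,t ∈ S`; this is equality of classes in the
Marshall quotient `A/ₘS`. -/
def simM (S : Set A) (a b : A) : Prop := ∃ s ∈ S, ∃ t ∈ S, a * s = b * t

/-- `S̄ = {x : xs ∈ S for some s ∈ S}` -/
def mbar (S : Set A) : Set A := {x : A | ∃ s ∈ S, x * s ∈ S}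

/-- membership of classes in the multivalued sum of the Marshall quotient `A/ₘS`:
`[a] ∈ [b] + [c]` iff `as ∈ bt + cu` for some `s,t,u ∈ S`. -/
def qmemM (S : Set A) (a b c : A) : Prop :=
  ∃ s ∈ S, ∃ t ∈ S, ∃ u ∈ S, a * s ∈ madd (b * t) (c * u)

/-- representatives `x` with `[x] ∈ [c₁] + ⋯ + [cₙ]` in the Marshall quotient `A/ₘS` -/
def qlistSumM (S : Set A) : List A → Set A
  | [] => {x : A | simM S x 0}
  | c :: l => {x : A | ∃ y ∈ qlistSumM S l, qmemM S x c y}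

/-- the multivalued sum of the hyperfield `3 = {-1, 0, 1}` -/
def signAdd : SignType → SignType → Set SignType
  | SignType.zero, x => {x}
  | x, SignType.zero => {x}
  | SignType.pos, SignType.pos => {SignType.pos}
  | SignType.neg, SignType.neg => {SignType.neg}
  | _, _ => Set.univ

/-- a multiring morphism `A → 3`, i.e. an order of `A` -/
def IsSignMorphism (σ : A → SignType) : Prop :=
  (∀ a b c : A, a ∈ madd b c → σ a ∈ signAdd (σ b) (σ c)) ∧
  (∀ a b : A, σ (a * b) = σ a * σ b) ∧
  (∀ a : A, σ (-a) = -(σ a)) ∧ σ 0 = 0 ∧ σ 1 = 1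

/-- a prime cone of a multiring -/
def IsPrimeCone (P : Set A) : Prop :=
  (∀ a : A, a * a ∈ P) ∧ (∀ a ∈ P, ∀ b ∈ P, madd a b ⊆ P) ∧
  (∀ a ∈ P, ∀ b ∈ P, a * b ∈ P) ∧ (∀ a : A, a ∈ P ∨ -a ∈ P) ∧
  IsPrimeIdeal {x : A | x ∈ P ∧ -x ∈ P}

open Classical in
/-- the map `σ_P : A → 3` associated to a prime cone `P` -/
noncomputable def sigmaOf (P : Set A) (a : A) : SignType :=
  if a ∈ P ∧ -a ∈ P then 0 else if a ∈ P then 1 else -1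

/-- `ΣA²`: the set of elements lying in some finite sum of squares -/
def SumsOfSquares (A : Type u) [Multiring A] : Set A :=
  {x : A | ∃ l : List A, l ≠ [] ∧ x ∈ listSum (l.map fun a => a * a)}

/-- a multiring is semi-real when `-1 ∉ ΣA²` -/
def IsSemiReal (A : Type u) [Multiring A] : Prop := (-(1 : A)) ∉ SumsOfSquares A

/-- a real reduced multiring -/
def IsRealReduced (A : Type u) [Multiring A] : Prop :=
  IsSemiReal A ∧ (∀ a : A, a * a * a = a) ∧
  (∀ a b : A, madd a (a * b * b) = {a}) ∧
  (∀ a b : A, ∃ c : A, madd (a * a) (b * b) = {c})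

/-- a hyperfield: a hyperring with `1 ≠ 0` and all nonzero elements invertible -/
def IsHyperfield (A : Type u) [Multiring A] : Prop :=
  IsHyperring A ∧ (1 : A) ≠ 0 ∧ ∀ a : A, a ≠ 0 → ∃ b : A, a * b = 1

/-- a morphism of multirings -/
def IsMorphism {B : Type v} [Multiring B] (f : A → B) : Prop :=
  (∀ a b c : A, a ∈ madd b c → f a ∈ madd (f b) (f c)) ∧
  (∀ a b : A, f (a * b) = f a * f b) ∧
  (∀ a : A, f (-a) = -(f a)) ∧ f 0 = 0 ∧ f 1 = 1

/-- the radical `√α = {x : xⁿ ∈ α for some n ≥ 1}` of an ideal -/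
def radical (α : Set A) : Set A := {x : A | ∃ n : ℕ, 1 ≤ n ∧ x ^ n ∈ α}

/-- the ideal `(x) = ∪ {t₁x + ⋯ + tₙx}` generated by `x` -/
def genIdeal (x : A) : Set A :=
  {y : A | ∃ l : List A, l ≠ [] ∧ y ∈ listSum (l.map fun t => t * x)}

/-- `S_a = {x : aⁿ ∈ (x) for some n ≥ 0}` -/
def Sgen (a : A) : Set A := {x : A | ∃ n : ℕ, a ^ n ∈ genIdeal x}

/-- `a` is weak-invertible when `1 ∈ ab₁ + ⋯ + abₙ` for some `b₁,…,bₙ` -/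
def WeakInvertible (a : A) : Prop :=
  ∃ l : List A, l ≠ [] ∧ (1 : A) ∈ listSum (l.map fun b => a * b)

/-- the prime spectrum of a multiring -/
abbrev Spec (A : Type u) [Multiring A] : Type u := {p : Set A // IsPrimeIdeal p}

/-- the spectral topology on `spec A`, generated by the sets `D(a) = {p : a ∉ p}` -/
instance : TopologicalSpace (Spec A) :=
  TopologicalSpace.generateFrom {U : Set (Spec A) | ∃ a : A, U = {p : Spec A | a ∉ p.1}}

/-- the Marshall quotient `A/ₘS` is a real reduced multiring (expressed on
representatives) -/
def QuotIsRealReduced (S : Set A) : Prop :=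
  (∀ l : List A, l ≠ [] → (-(1 : A)) ∉ qlistSumM S (l.map fun a => a * a)) ∧
  (∀ a : A, simM S (a * a * a) a) ∧
  (∀ a b x : A, qmemM S x a (a * b * b) ↔ simM S x a) ∧
  (∀ a b : A, ∃ c : A, ∀ x : A, qmemM S x (a * a) (b * b) ↔ simM S x c)

/-- the Marshall quotient `A/ₘS` is a geometric von Neumann hyperring
(expressed on representatives): it is a hyperring, von Neumann regular, and
`e + eᶜ = {1}` for every idempotent `e` -/
def QuotGeometricVN (S : Set A) : Prop :=
  (∀ x b c d : A, qmemM S x (b * d) (c * d) → ∃ a : A, qmemM S a b c ∧ simM S x (a * d)) ∧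
  (∀ a : A, ∃ b : A, simM S a (a * a * b)) ∧
  (∀ e x : A, simM S (e * e) e → qmemM S x 1 (-e) → simM S (e * x) 0 →
    ∀ y : A, qmemM S y e x ↔ simM S y 1)

/-- a von Neumann subgroup: a multiplicative set such that for every idempotent
`a` (with complement `aᶜ`) and every `x ∈ D_S(a, aᶜ)` there is `s ∈ S` with `xs ∈ S` -/
def IsVNSubgroup (S : Set A) : Prop :=
  IsMultiplicative S ∧
    ∀ a x ac : A, a * a = a → ac ∈ madd 1 (-a) → a * ac = 0 →
      (∃ u ∈ S, ∃ v ∈ S, ∃ w ∈ S, x * u ∈ madd (a * v) (ac * w)) →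
      ∃ s ∈ S, x * s ∈ S

/-- a preorder of a multiring -/
def IsPreorderSet (T : Set A) : Prop :=
  (∀ a : A, a * a ∈ T) ∧ (∀ a ∈ T, ∀ b ∈ T, a * b ∈ T) ∧ (∀ a ∈ T, ∀ b ∈ T, madd a b ⊆ T)

/-- `1 + T = ∪ {1 + t : t ∈ T}` -/
def oneAdd (T : Set A) : Set A := {x : A | ∃ t ∈ T, x ∈ madd 1 t}

/-- `ΣḞ²`: elements lying in some finite sum of squares of nonzero elements -/
def sumSqNonzero (A : Type u) [Multiring A] : Set A :=
  {x : A | ∃ l : List A, l ≠ [] ∧ (∀ a ∈ l, a ≠ 0) ∧ x ∈ listSum (l.map fun a => a * a)}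

end Multiring

namespace MultiringRadicalAux

open Multiring

variable {A : Type u} [Multiring A]

lemma mem_madd_zero_left {a b : A} (h : a ∈ madd 0 b) : a = b := by
  rw [madd_comm] at h; exact (mem_madd_zero a b).mp h

lemma zero_mul' (a : A) : (0 : A) * a = 0 := by
  rw [mul_comm]; exact mul_zero' a

lemma listSum_nil : (listSum ([] : List A)) = {(0 : A)} := rfl

lemma listSum_cons (a : A) (l : List A) :
    listSum (a :: l) = {x : A | ∃ y ∈ listSum l, x ∈ madd a y} := rfl

lemma listSum_append {l1 l2 : List A} {y z w : A} (hy : y ∈ listSum l1)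
    (hz : z ∈ listSum l2) (hw : w ∈ madd y z) : w ∈ listSum (l1 ++ l2) := by
  induction l1 generalizing y w with
  | nil =>
    have : y = 0 := hy
    subst this
    have : w = z := mem_madd_zero_left hw
    simpa [this] using hz
  | cons a t ih =>
    obtain ⟨y', hy', hyy⟩ := hy
    obtain ⟨h, hh, hw'⟩ := madd_assoc a y' z y w hyy hw
    exact ⟨h, ih hy' hh, hw'⟩

lemma listSum_mul {l : List A} {y : A} (hy : y ∈ listSum l) (d : A) :
    y * d ∈ listSum (l.map (· * d)) := by
  induction l generalizing y with
  | nil =>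
    have : y = 0 := hy
    subst this
    show (0 : A) * d ∈ listSum ([] : List A)
    simp [zero_mul', listSum_nil]
  | cons a t ih =>
    obtain ⟨y', hy', hyy⟩ := hy
    exact ⟨y' * d, ih hy', madd_mul y a y' d hyy⟩

lemma zero_mem_ideal {I : Set A} (hI : IsIdeal I) : (0 : A) ∈ I := by
  obtain ⟨b, hb⟩ := hI.1
  have := hI.2.2 0 b hb
  rwa [zero_mul'] at this

lemma listSum_mem {I : Set A} (hI : IsIdeal I) {l : List A}
    (hl : ∀ z ∈ l, z ∈ I) {y : A} (hy : y ∈ listSum l) : y ∈ I := by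
  induction l generalizing y with
  | nil =>
    have : y = 0 := hy
    exact this ▸ zero_mem_ideal hI
  | cons a t ih =>
    obtain ⟨y', hy', hyy⟩ := hy
    exact hI.2.1 a (hl a (by simp)) y' (ih (fun z hz => hl z (by simp [hz])) hy') hyy

/-- The ideal generated by a set. -/
def genSet (X : Set A) : Set A :=
  {y : A | ∃ l : List A, (∀ z ∈ l, ∃ t g, g ∈ X ∧ z = t * g) ∧ y ∈ listSum l}

lemma genSet_ideal (X : Set A) : IsIdeal (genSet X) := by
  refine ⟨⟨0, [], by simp, rfl⟩, ?_, ?_⟩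
  · rintro a ⟨l1, hl1, hy1⟩ b ⟨l2, hl2, hy2⟩ w hw
    refine ⟨l1 ++ l2, ?_, listSum_append hy1 hy2 hw⟩
    intro z hz
    rcases List.mem_append.mp hz with h | h
    · exact hl1 z h
    · exact hl2 z h
  · rintro a b ⟨l, hl, hy⟩
    refine ⟨l.map (· * a), ?_, ?_⟩
    · intro z hz
      obtain ⟨u, hu, rfl⟩ := List.mem_map.mp hz
      obtain ⟨t, g, hg, rfl⟩ := hl u hu
      exact ⟨t * a, g, hg, by rw [mul_assoc, mul_comm g a, ← mul_assoc]⟩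
    · have := listSum_mul hy a
      rwa [mul_comm a b]

lemma subset_genSet (X : Set A) : X ⊆ genSet X := by
  intro g hg
  refine ⟨[g], fun z hz => ?_, ⟨0, rfl, (mem_madd_zero g g).mpr rfl⟩⟩
  simp only [List.mem_singleton] at hz
  exact ⟨1, g, hg, by rw [hz, one_mul]⟩

lemma genSet_subset {X I : Set A} (hI : IsIdeal I) (hXI : X ⊆ I) :
    genSet X ⊆ I := by
  rintro y ⟨l, hl, hy⟩
  refine listSum_mem hI (fun z hz => ?_) hy
  obtain ⟨t, g, hg, rfl⟩ := hl z hz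
  exact hI.2.2 t g (hXI hg)

lemma prod_mem_of_mul_mem {M : Set A} (hM : IsIdeal M) {a b : A}
    (hab : a * b ∈ M) {y z : A} (hy : y ∈ genSet (M ∪ {a}))
    (hz : z ∈ genSet (M ∪ {b})) : y * z ∈ M := by
  obtain ⟨l, hl, hy'⟩ := hy
  obtain ⟨l', hl', hz'⟩ := hz
  refine listSum_mem hM (l := l.map (· * z)) ?_ (listSum_mul hy' z)
  intro w hw
  obtain ⟨u, hu, rfl⟩ := List.mem_map.mp hw
  obtain ⟨t, g, hg, rfl⟩ := hl u hu
  -- show (t * g) * z ∈ M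
  rw [mul_comm (t * g) z]
  refine listSum_mem hM (l := l'.map (· * (t * g))) ?_ (listSum_mul hz' (t * g))
  intro v hv
  obtain ⟨u', hu', rfl⟩ := List.mem_map.mp hv
  obtain ⟨t', g', hg', rfl⟩ := hl' u' hu'
  have hgg : g' * g ∈ M := by
    rcases hg' with hg' | hg'
    · rw [mul_comm]; exact hM.2.2 g g' hg'
    · rcases hg with hg | hg
      · exact hM.2.2 g' g hg
      · simp only [Set.mem_singleton_iff] at hg hg'
        rw [hg, hg', mul_comm]; exact hab
  have : (t' * g') * (t * g) = (t' * t) * (g' * g) := by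
    rw [mul_assoc, mul_assoc, mul_comm g' (t * g), mul_assoc, mul_comm g g']
  rw [this]
  exact hM.2.2 (t' * t) (g' * g) hgg

lemma pow_mem_prime {p : Set A} (hp : IsPrimeIdeal p) {x : A} :
    ∀ n : ℕ, 1 ≤ n → x ^ n ∈ p → x ∈ p := by
  intro n
  induction n with
  | zero => intro h; omega
  | succ m ih =>
    intro _ hx
    rcases Nat.eq_zero_or_pos m with hm | hm
    · subst hm; simpa using hx
    · rw [pow_succ] at hx
      rcases hp.2.2 _ _ hx with h | h
      · exact ih hm h
      · exact h

lemma rad_eq {α : Set A} (hα : IsIdeal α) :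
    radical α = {x : A | ∀ p : Set A, IsPrimeIdeal p → α ⊆ p → x ∈ p} := by
  ext x
  constructor
  · rintro ⟨n, hn, hx⟩ p hp hαp
    exact pow_mem_prime hp n hn (hαp hx)
  · intro hx
    by_contra hrad
    have hpow : ∀ n : ℕ, x ^ n ∉ α := by
      intro n hxn
      rcases Nat.eq_zero_or_pos n with hn | hn
      · subst hn
        simp only [pow_zero] at hxn
        exact hrad ⟨1, le_refl 1, by simpa using hα.2.2 x 1 hxn⟩
      · exact hrad ⟨n, hn, hxn⟩
    -- Zorn
    set F : Set (Set A) := {I | IsIdeal I ∧ α ⊆ I ∧ ∀ n : ℕ, x ^ n ∉ I} with hF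
    have hαF : α ∈ F := ⟨hα, subset_rfl, hpow⟩
    have hzorn : ∀ c ⊆ F, IsChain (· ⊆ ·) c → c.Nonempty →
        ∃ ub ∈ F, ∀ s ∈ c, s ⊆ ub := by
      intro c hcF hchain hcne
      obtain ⟨I0, hI0⟩ := hcne
      refine ⟨⋃₀ c, ⟨⟨⟨0, Set.mem_sUnion.mpr ⟨I0, hI0, zero_mem_ideal (hcF hI0).1⟩⟩, ?_, ?_⟩, ?_, ?_⟩,
        fun s hs => Set.subset_sUnion_of_mem hs⟩
      · rintro a ⟨I, hI, haI⟩ b ⟨J, hJ, hbJ⟩ w hw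
        rcases hchain.total hI hJ with h | h
        · exact Set.mem_sUnion.mpr ⟨J, hJ, (hcF hJ).1.2.1 a (h haI) b hbJ hw⟩
        · exact Set.mem_sUnion.mpr ⟨I, hI, (hcF hI).1.2.1 a haI b (h hbJ) hw⟩
      · rintro a b ⟨I, hI, hbI⟩
        exact Set.mem_sUnion.mpr ⟨I, hI, (hcF hI).1.2.2 a b hbI⟩
      · exact fun y hy => Set.mem_sUnion.mpr ⟨I0, hI0, (hcF hI0).2.1 hy⟩
      · rintro n ⟨I, hI, hxI⟩
        exact (hcF hI).2.2 n hxI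
    obtain ⟨M, hαM, hMmax⟩ := zorn_subset_nonempty F hzorn α hαF
    obtain ⟨hMid, hαsub, hMpow⟩ := hMmax.1
    -- M is prime
    have hMprime : IsPrimeIdeal M := by
      refine ⟨hMid, fun h1 => hMpow 0 (by simpa using h1), ?_⟩
      intro a b hab
      by_contra hcon
      push_neg at hcon
      obtain ⟨ha, hb⟩ := hcon
      have key : ∀ g : A, g ∉ M → ∃ n : ℕ, x ^ n ∈ genSet (M ∪ {g}) := by
        intro g hg
        by_contra hno
        push_neg at hno
        have hJF : genSet (M ∪ {g}) ∈ F :=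
          ⟨genSet_ideal _,
           subset_trans hαsub (subset_trans Set.subset_union_left (subset_genSet _)), hno⟩
        have hJM : genSet (M ∪ {g}) ⊆ M :=
          hMmax.2 hJF (subset_trans Set.subset_union_left (subset_genSet _))
        exact hg (hJM (subset_genSet _ (Set.mem_union_right _ rfl)))
      obtain ⟨n, hn⟩ := key a ha
      obtain ⟨m, hm⟩ := key b hb
      have hnm : x ^ (n + m) ∈ M := by
        rw [pow_add]; exact prod_mem_of_mul_mem hMid hab hn hm
      exact hMpow _ hnm
    exact hMpow 1 (by simpa using hx M hMprime hαsub)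

end MultiringRadicalAux


/-- `√α` is the intersection of all prime ideals containing `α`; in particular
the intersection of all prime ideals is the set of nilpotents. -/
theorem radical_eq_inter_primes {A : Type u} [Multiring A] (α : Set A)
    (hα : Multiring.IsIdeal α) :
    Multiring.radical α =
      {x : A | ∀ p : Set A, Multiring.IsPrimeIdeal p → α ⊆ p → x ∈ p} ∧
    {x : A | ∀ p : Set A, Multiring.IsPrimeIdeal p → x ∈ p} =
      {x : A | ∃ n : ℕ, 1 ≤ n ∧ x ^ n = 0} := by
  constructor
  · exact MultiringRadicalAux.rad_eq hα
  · have h0 : Multiring.IsIdeal ({0} : Set A) := by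
      refine ⟨⟨0, rfl⟩, ?_, ?_⟩
      · rintro a rfl b rfl w hw
        exact (Multiring.mem_madd_zero w 0).mp hw
      · rintro a b rfl
        exact Multiring.mul_zero' a
    have hrad := MultiringRadicalAux.rad_eq h0
    ext x
    constructor
    · intro hx
      have hx2 : x ∈ Multiring.radical ({0} : Set A) := by
        rw [hrad]
        intro p hp _
        exact hx p hp
      obtain ⟨n, hn, hxn⟩ := hx2
      exact ⟨n, hn, hxn⟩
    · rintro ⟨n, hn, hxn⟩ p hp
      exact MultiringRadicalAux.pow_mem_prime hp n hn
        (hxn ▸ MultiringRadicalAux.zero_mem_ideal hp.1)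
end

section
/- Let A be a multiring and a ∈ A. Then S_a equals the intersection of the complements A∖p over all prime ideals p with a ∉ p. In particular, the intersection of the complements of all prime ideals of A equals the set of weak-invertible elements of A. -/
universe u v

namespace MultiringAux

open Multiring

variable {A : Type u} [Multiring A]

lemma mem_madd_zero_left {z y : A} : z ∈ madd (0 : A) y ↔ z = y := by
  rw [madd_comm]; exact mem_madd_zero z y

lemma zero_mul'' (a : A) : (0 : A) * a = 0 := by rw [mul_comm]; exact mul_zero' a

lemma self_mem_madd_self_zero (b : A) : b ∈ madd b (0 : A) :=
  (mem_madd_zero b b).mpr rfl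

lemma ideal_zero_mem {I : Set A} (hI : IsIdeal I) : (0 : A) ∈ I := by
  obtain ⟨⟨b, hb⟩, _, hmul⟩ := hI
  have := hmul 0 b hb
  rwa [zero_mul''] at this

lemma ideal_listSum_subset {I : Set A} (hI : IsIdeal I) :
    ∀ l : List A, (∀ c ∈ l, c ∈ I) → listSum l ⊆ I
  | [], _ => by
      intro z hz
      simp only [listSum, Set.mem_singleton_iff] at hz
      subst hz; exact ideal_zero_mem hI
  | c :: l, h => by
      intro z hz
      obtain ⟨y, hy, hzy⟩ := hz
      exact hI.2.1 c (h c (by simp)) y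
        (ideal_listSum_subset hI l (fun d hd => h d (by simp [hd])) hy) hzy

lemma ideal_genIdeal_subset {I : Set A} (hI : IsIdeal I) {x : A} (hx : x ∈ I) :
    genIdeal x ⊆ I := by
  rintro y ⟨l, -, hy⟩
  refine ideal_listSum_subset hI _ (fun c hc => ?_) hy
  obtain ⟨t, -, rfl⟩ := List.mem_map.mp hc
  exact hI.2.2 t x hx

lemma self_mem_genIdeal (x : A) : x ∈ genIdeal x :=
  ⟨[1], by simp, ⟨0, rfl, by simpa using self_mem_madd_self_zero x⟩⟩

lemma zero_mem_genIdeal (x : A) : (0 : A) ∈ genIdeal x :=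
  ⟨[0], by simp, ⟨0, rfl, by simpa [zero_mul''] using self_mem_madd_self_zero (0 : A)⟩⟩

lemma listSum_mul {d : A} : ∀ {l : List A} {y : A},
    y ∈ listSum l → y * d ∈ listSum (l.map (· * d))
  | [], y, hy => by
      simp only [listSum, Set.mem_singleton_iff, List.map_nil] at hy ⊢
      rw [hy]; exact zero_mul'' d
  | c :: l, y, hy => by
      obtain ⟨w, hw, hyw⟩ := hy
      exact ⟨w * d, listSum_mul hw, madd_mul y c w d hyw⟩

lemma listSum_append : ∀ {l₁ l₂ : List A} {y₁ y₂ z : A},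
    y₁ ∈ listSum l₁ → y₂ ∈ listSum l₂ → z ∈ madd y₁ y₂ → z ∈ listSum (l₁ ++ l₂)
  | [], l₂, y₁, y₂, z, h1, h2, hz => by
      simp only [listSum, Set.mem_singleton_iff] at h1
      subst h1
      rw [mem_madd_zero_left.mp hz]
      simpa using h2
  | c :: l₁, l₂, y₁, y₂, z, h1, h2, hz => by
      obtain ⟨w, hw, h1w⟩ := h1
      obtain ⟨h, hh, hzh⟩ := madd_assoc c w y₂ y₁ z h1w hz
      exact ⟨h, listSum_append hw h2 hh, hzh⟩

lemma genIdeal_mul_right {b y : A} (hy : y ∈ genIdeal b) (d : A) :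
    y * d ∈ genIdeal (b * d) := by
  obtain ⟨l, hl, hy⟩ := hy
  refine ⟨l, hl, ?_⟩
  have h := listSum_mul (d := d) hy
  rw [List.map_map] at h
  have he : ((· * d) ∘ fun t : A => t * b) = fun t : A => t * (b * d) :=
    funext fun t => by simp [Function.comp, mul_assoc]
  rwa [he] at h

lemma genIdeal_mul_left {b y : A} (hy : y ∈ genIdeal b) (d : A) :
    d * y ∈ genIdeal b := by
  obtain ⟨l, hl, hy⟩ := hy
  refine ⟨l.map (· * d), by simpa using hl, ?_⟩
  have h := listSum_mul (d := d) hy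
  rw [List.map_map] at h
  rw [List.map_map]
  rw [mul_comm]
  have he2 : ((fun t : A => t * b) ∘ (· * d)) = ((· * d) ∘ fun t : A => t * b) :=
    funext fun t => by simp [Function.comp, mul_right_comm]
  rwa [he2]

lemma genIdeal_isIdeal (x : A) : IsIdeal (genIdeal x) := by
  refine ⟨⟨x, self_mem_genIdeal x⟩, ?_, fun a b hb => genIdeal_mul_left hb a⟩
  rintro y₁ ⟨l₁, hl₁, h1⟩ y₂ ⟨l₂, hl₂, h2⟩ z hz
  refine ⟨l₁ ++ l₂, by simp [hl₁], ?_⟩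
  rw [List.map_append]
  exact listSum_append h1 h2 hz

lemma madd_assoc' {a b c h x : A} (hh : h ∈ madd b c) (hx : x ∈ madd a h) :
    ∃ g ∈ madd a b, x ∈ madd g c := by
  rw [madd_comm] at hh hx
  obtain ⟨g, hg, hxg⟩ := madd_assoc c b a h x hh hx
  rw [madd_comm] at hg
  rw [madd_comm] at hxg
  exact ⟨g, hg, hxg⟩

lemma madd_rearrange {i1 y1 i2 y2 z1 z2 w : A}
    (h1 : z1 ∈ madd i1 y1) (h2 : z2 ∈ madd i2 y2) (hw : w ∈ madd z1 z2) :
    ∃ u ∈ madd i1 i2, ∃ v ∈ madd y1 y2, w ∈ madd u v := by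
  obtain ⟨g1, hg1, hw1⟩ := madd_assoc' h2 hw
  obtain ⟨h2', hh2', hg1'⟩ := madd_assoc i1 y1 i2 z1 g1 h1 hg1
  rw [madd_comm] at hh2'
  obtain ⟨u, hu, hg1u⟩ := madd_assoc' hh2' hg1'
  obtain ⟨v, hv, hwv⟩ := madd_assoc u y1 y2 g1 w hg1u hw1
  exact ⟨u, hu, v, hv, hwv⟩

/-- the ideal generated by `I ∪ {b}` -/
def extIdeal (I : Set A) (b : A) : Set A :=
  {z : A | ∃ i ∈ I, ∃ y ∈ genIdeal b, z ∈ madd i y}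

lemma extIdeal_isIdeal {I : Set A} (hI : IsIdeal I) (b : A) :
    IsIdeal (extIdeal I b) := by
  refine ⟨⟨0, 0, ideal_zero_mem hI, 0, zero_mem_genIdeal b, self_mem_madd_self_zero 0⟩, ?_, ?_⟩
  · rintro z1 ⟨i1, hi1, y1, hy1, hz1⟩ z2 ⟨i2, hi2, y2, hy2, hz2⟩ w hw
    obtain ⟨u, hu, v, hv, hwv⟩ := madd_rearrange hz1 hz2 hw
    exact ⟨u, hI.2.1 i1 hi1 i2 hi2 hu, v,
      (genIdeal_isIdeal b).2.1 y1 hy1 y2 hy2 hv, hwv⟩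
  · rintro d z ⟨i, hi, y, hy, hz⟩
    refine ⟨i * d, ?_, y * d, ?_, ?_⟩
    · rw [mul_comm]; exact hI.2.2 d i hi
    · rw [mul_comm]; exact genIdeal_mul_left hy d
    · rw [mul_comm d z]; exact madd_mul z i y d hz

lemma subset_extIdeal {I : Set A} (b : A) : I ⊆ extIdeal I b :=
  fun i hi => ⟨i, hi, 0, zero_mem_genIdeal b, self_mem_madd_self_zero i⟩

lemma mem_extIdeal {I : Set A} (hI : IsIdeal I) (b : A) : b ∈ extIdeal I b :=
  ⟨0, ideal_zero_mem hI, b, self_mem_genIdeal b, mem_madd_zero_left.mpr rfl⟩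

lemma pow_mem_prime {p : Set A} (hp : IsPrimeIdeal p) {a : A} :
    ∀ {n : ℕ}, a ^ n ∈ p → a ∈ p
  | 0, h => absurd (by simpa using h) hp.2.1
  | n + 1, h => by
      rw [pow_succ] at h
      rcases hp.2.2 _ _ h with h' | h'
      · exact pow_mem_prime hp h'
      · exact h'

lemma prod_step {I : Set A} (hI : IsIdeal I) {a b c : A} {m k : ℕ}
    (hb : a ^ m ∈ extIdeal I b) (hc : a ^ k ∈ extIdeal I c) (hbc : b * c ∈ I) :
    a ^ (m + k) ∈ I := by
  obtain ⟨i, hi, y, hy, hm⟩ := hb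
  obtain ⟨i', hi', y', hy', hk⟩ := hc
  have h1 : a ^ (m + k) ∈ madd (i * a ^ k) (y * a ^ k) := by
    rw [pow_add]; exact madd_mul _ _ _ _ hm
  have h2 : y * a ^ k ∈ madd (i' * y) (y' * y) := by
    rw [mul_comm y (a ^ k)]
    exact madd_mul _ _ _ _ hk
  have hiI : i * a ^ k ∈ I := by rw [mul_comm]; exact hI.2.2 _ i hi
  have hi'I : i' * y ∈ I := by rw [mul_comm]; exact hI.2.2 _ i' hi'
  have hy'yI : y' * y ∈ I := by
    have h3 : y' * b ∈ I :=
      ideal_genIdeal_subset hI (by rw [mul_comm c b]; exact hbc) (genIdeal_mul_right hy' b)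
    have h4 : y * y' ∈ I :=
      ideal_genIdeal_subset hI (by rw [mul_comm b y']; exact h3) (genIdeal_mul_right hy y')
    rwa [mul_comm]
  have hyI : y * a ^ k ∈ I := hI.2.1 _ hi'I _ hy'yI h2
  exact hI.2.1 _ hiI _ hyI h1

end MultiringAux

namespace MultiringAux

open Multiring

variable {A : Type u} [Multiring A]

lemma exists_prime (a x : A) (hx : ∀ n : ℕ, a ^ n ∉ genIdeal x) :
    ∃ p : Set A, IsPrimeIdeal p ∧ a ∉ p ∧ x ∈ p := by
  set S : Set (Set A) := {I | IsIdeal I ∧ x ∈ I ∧ ∀ n : ℕ, a ^ n ∉ I} with hS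
  have hgen : genIdeal x ∈ S := ⟨genIdeal_isIdeal x, self_mem_genIdeal x, hx⟩
  have hzorn : ∀ c ⊆ S, IsChain (· ⊆ ·) c → c.Nonempty → ∃ ub ∈ S, ∀ s ∈ c, s ⊆ ub := by
    intro c hc hchain hcne
    obtain ⟨I0, hI0⟩ := hcne
    refine ⟨⋃₀ c, ⟨⟨?_, ?_, ?_⟩, ⟨I0, hI0, (hc hI0).2.1⟩, ?_⟩, fun s hs => Set.subset_sUnion_of_mem hs⟩
    · exact ⟨x, I0, hI0, (hc hI0).2.1⟩
    · rintro z1 ⟨I1, hI1, hz1⟩ z2 ⟨I2, hI2, hz2⟩ w hw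
      rcases hchain.total hI1 hI2 with h | h
      · exact ⟨I2, hI2, (hc hI2).1.2.1 z1 (h hz1) z2 hz2 hw⟩
      · exact ⟨I1, hI1, (hc hI1).1.2.1 z1 hz1 z2 (h hz2) hw⟩
    · rintro d z ⟨I1, hI1, hz⟩
      exact ⟨I1, hI1, (hc hI1).1.2.2 d z hz⟩
    · rintro n ⟨I1, hI1, hn⟩
      exact (hc hI1).2.2 n hn
  obtain ⟨m, hsub, hmS, hmax⟩ := zorn_subset_nonempty S hzorn _ hgen
  obtain ⟨hmI, hxm, hma⟩ := hmS
  have h1 : (1 : A) ∉ m := fun h => hma 0 (by simpa using h)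
  have key : ∀ b : A, b ∉ m → ∃ n : ℕ, a ^ n ∈ extIdeal m b := by
    intro b hb
    by_contra hcon
    push_neg at hcon
    have hmem : extIdeal m b ∈ S :=
      ⟨extIdeal_isIdeal hmI b, subset_extIdeal b hxm, hcon⟩
    exact hb ((hmax hmem (subset_extIdeal b)) (mem_extIdeal hmI b))
  have hprime : IsPrimeIdeal m := by
    refine ⟨hmI, h1, fun b c hbc => ?_⟩
    by_contra hcon
    push_neg at hcon
    obtain ⟨nb, hnb⟩ := key b hcon.1
    obtain ⟨nc, hnc⟩ := key c hcon.2
    exact hma (nb + nc) (prod_step hmI hnb hnc hbc)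
  exact ⟨m, hprime, fun ha => hma 1 (by simpa using ha), hxm⟩

lemma Sgen_eq (a : A) :
    Sgen a = {x : A | ∀ p : Set A, IsPrimeIdeal p → a ∉ p → x ∉ p} := by
  ext x
  constructor
  · rintro ⟨n, hn⟩ p hp hap hxp
    exact hap (pow_mem_prime hp (ideal_genIdeal_subset hp.1 hxp hn))
  · intro h
    by_contra hx
    obtain ⟨p, hp, hap, hxp⟩ := exists_prime a x (fun n hn => hx ⟨n, hn⟩)
    exact h p hp hap hxp

lemma weakInvertible_iff (x : A) : WeakInvertible x ↔ (1 : A) ∈ genIdeal x := by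
  have he : (fun b => x * b) = (fun t : A => t * x) := funext fun b => mul_comm x b
  unfold WeakInvertible genIdeal
  rw [he]
  rfl

end MultiringAux

/-- `S_a` is the intersection of the complements of the prime ideals not
containing `a`; in particular the intersection of the complements of all prime
ideals is the set of weak-invertible elements. -/
theorem Sgen_eq_inter_compl_primes {A : Type u} [Multiring A] (a : A) :
    Multiring.Sgen a =
      {x : A | ∀ p : Set A, Multiring.IsPrimeIdeal p → a ∉ p → x ∉ p} ∧
    {x : A | ∀ p : Set A, Multiring.IsPrimeIdeal p → x ∉ p} =
      {x : A | Multiring.WeakInvertible x} := by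
  constructor
  · exact MultiringAux.Sgen_eq a
  · ext x
    simp only [Set.mem_setOf_eq]
    rw [MultiringAux.weakInvertible_iff]
    constructor
    · intro h
      have hx : x ∈ Multiring.Sgen (1 : A) := by
        rw [MultiringAux.Sgen_eq]
        intro p hp _
        exact h p hp
      obtain ⟨n, hn⟩ := hx
      simpa using hn
    · intro h p hp
      have hx : x ∈ Multiring.Sgen (1 : A) := ⟨0, by simpa using h⟩
      rw [MultiringAux.Sgen_eq] at hx
      exact hx p hp hp.2.1
end

section
/- Let A be a multiring and a,b ∈ A. The following are equivalent: (a) D(a) ⊆ D(b); (b) √((a)) ⊆ √((b)); (c) a ∈ √((b)); (d) S_b ⊆ S_a. -/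
universe u v

namespace Multiring

variable {A : Type u} [Multiring A]

section Aux

lemma mem_madd_zero_left {a b : A} : a ∈ madd 0 b ↔ a = b := by
  rw [madd_comm]; exact mem_madd_zero a b

lemma madd_assoc' {z a w u v : A} (h1 : z ∈ madd a w) (h2 : w ∈ madd u v) :
    ∃ h ∈ madd a u, z ∈ madd h v := by
  obtain ⟨h₁, hh₁, hz₁⟩ := madd_assoc u v a w z h2 (by rwa [madd_comm] at h1)
  obtain ⟨h₂, hh₂, hz₂⟩ := madd_assoc v a u h₁ z hh₁ (by rwa [madd_comm] at hz₁)
  exact ⟨h₂, hh₂, by rwa [madd_comm] at hz₂⟩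

lemma mem_listSum_singleton {x c : A} : x ∈ listSum [c] ↔ x = c := by
  constructor
  · rintro ⟨y, hy, hx⟩
    rcases hy with rfl
    exact (mem_madd_zero x c).1 hx
  · rintro rfl
    exact ⟨0, rfl, (mem_madd_zero _ _).2 rfl⟩

lemma mem_listSum_append {L₁ L₂ : List A} {z : A} :
    z ∈ listSum (L₁ ++ L₂) ↔ ∃ u ∈ listSum L₁, ∃ v ∈ listSum L₂, z ∈ madd u v := by
  induction L₁ generalizing z with
  | nil =>
    simp only [List.nil_append]
    constructor
    · intro hz
      exact ⟨0, rfl, z, hz, mem_madd_zero_left.2 rfl⟩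
    · rintro ⟨u, hu, v, hv, hz⟩
      rcases hu with rfl
      rcases mem_madd_zero_left.1 hz with rfl
      exact hv
  | cons c L ih =>
    constructor
    · rintro ⟨y, hy, hz⟩
      obtain ⟨u, hu, v, hv, hyuv⟩ := ih.1 hy
      obtain ⟨h, hh, hzh⟩ := madd_assoc' hz hyuv
      exact ⟨h, ⟨u, hu, hh⟩, v, hv, hzh⟩
    · rintro ⟨u, ⟨w, hw, huw⟩, v, hv, hz⟩
      obtain ⟨h, hh, hzh⟩ := madd_assoc c w v u z huw hz
      exact ⟨h, ih.2 ⟨w, hw, v, hv, hh⟩, hzh⟩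

lemma listSum_mul {l : List A} {z : A} (h : z ∈ listSum l) (d : A) :
    z * d ∈ listSum (l.map (· * d)) := by
  induction l generalizing z with
  | nil =>
    rcases h with rfl
    show (0 : A) * d ∈ ({0} : Set A)
    rw [mul_comm, mul_zero']
    rfl
  | cons c l ih =>
    obtain ⟨y, hy, hz⟩ := h
    exact ⟨y * d, ih hy, madd_mul z c y d hz⟩

lemma listSum_subset {I : Set A} (h0 : (0 : A) ∈ I)
    (hadd : ∀ u ∈ I, ∀ v ∈ I, madd u v ⊆ I)
    {L : List A} (hL : ∀ w ∈ L, w ∈ I) {z : A} (hz : z ∈ listSum L) : z ∈ I := by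
  induction L generalizing z with
  | nil => rcases hz with rfl; exact h0
  | cons c L ih =>
    obtain ⟨y, hy, hz⟩ := hz
    exact hadd c (hL c List.mem_cons_self) y
      (ih (fun w hw => hL w (List.mem_cons_of_mem c hw)) hy) hz

lemma zero_mem_genIdeal (x : A) : (0 : A) ∈ genIdeal x := by
  refine ⟨[0], by simp, ?_⟩
  simp only [List.map_cons, List.map_nil]
  rw [show (0 : A) * x = 0 by rw [mul_comm, mul_zero']] at *
  exact mem_listSum_singleton.2 rfl

lemma self_mem_genIdeal (x : A) : x ∈ genIdeal x :=
  ⟨[1], by simp, by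
    simp only [List.map_cons, List.map_nil]
    exact mem_listSum_singleton.2 (one_mul x).symm⟩

lemma madd_subset_genIdeal {x u v : A} (hu : u ∈ genIdeal x) (hv : v ∈ genIdeal x) :
    madd u v ⊆ genIdeal x := by
  obtain ⟨l₁, hl₁, hm₁⟩ := hu
  obtain ⟨l₂, hl₂, hm₂⟩ := hv
  intro z hz
  refine ⟨l₁ ++ l₂, by simp [hl₁], ?_⟩
  rw [List.map_append]
  exact mem_listSum_append.2 ⟨u, hm₁, v, hm₂, hz⟩

lemma mul_mem_genIdeal_mul {x y : A} (h : y ∈ genIdeal x) (c : A) :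
    y * c ∈ genIdeal (x * c) := by
  obtain ⟨l, hl, hm⟩ := h
  refine ⟨l, hl, ?_⟩
  have := listSum_mul hm c
  rw [List.map_map] at this
  rwa [show ((fun s => s * c) ∘ fun t => t * x) = (fun t => t * (x * c)) from
    funext fun s => by simp only [Function.comp_apply]; rw [mul_assoc]] at this

lemma mul_mem_genIdeal {x u : A} (hu : u ∈ genIdeal x) (t : A) :
    t * u ∈ genIdeal x := by
  obtain ⟨l, hl, hm⟩ := hu
  refine ⟨l.map (· * t), by simpa using hl, ?_⟩
  have := listSum_mul hm t
  rw [List.map_map] at this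
  rw [List.map_map, mul_comm t u]
  rwa [show ((fun s => s * t) ∘ fun s => s * x) = ((fun s => s * x) ∘ fun s => s * t) from
    funext fun s => by simp only [Function.comp_apply]; rw [mul_right_comm]] at this

lemma genIdeal_subset {x c : A} (hx : x ∈ genIdeal c) : genIdeal x ⊆ genIdeal c := by
  intro u hu
  obtain ⟨l, hl, hm⟩ := hu
  refine listSum_subset (zero_mem_genIdeal c)
    (fun p hp q hq => madd_subset_genIdeal hp hq) ?_ hm
  intro w hw
  simp only [List.mem_map] at hw
  obtain ⟨t, -, rfl⟩ := hw
  exact mul_mem_genIdeal hx t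

lemma genIdeal_subset_of_mem_ideal {I : Set A} (hI : IsIdeal I) {x : A} (hx : x ∈ I) :
    genIdeal x ⊆ I := by
  obtain ⟨⟨c, hc⟩, haddI, hmulI⟩ := hI
  have h0 : (0 : A) ∈ I := by
    have := hmulI 0 c hc
    rwa [mul_comm, mul_zero'] at this
  intro u hu
  obtain ⟨l, hl, hm⟩ := hu
  refine listSum_subset h0 haddI ?_ hm
  intro w hw
  simp only [List.mem_map] at hw
  obtain ⟨t, -, rfl⟩ := hw
  exact hmulI t x hx

lemma pow_mem_genIdeal_pow {x y : A} (h : y ∈ genIdeal x) :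
    ∀ k : ℕ, 1 ≤ k → y ^ k ∈ genIdeal (x ^ k) := by
  intro k hk
  induction k with
  | zero => omega
  | succ n ih =>
    rcases Nat.eq_or_lt_of_le hk with h1 | h1
    · rw [← h1]
      simpa [pow_one] using h
    · have hn : 1 ≤ n := by omega
      have h1 : y ^ n * y ∈ genIdeal (x ^ n * y) := mul_mem_genIdeal_mul (ih hn) y
      have h2 : y * x ^ n ∈ genIdeal (x * x ^ n) := mul_mem_genIdeal_mul h (x ^ n)
      rw [mul_comm y (x ^ n), mul_comm x (x ^ n), ← pow_succ] at h2
      have := genIdeal_subset h2 h1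
      rwa [← pow_succ] at this

lemma genIdeal_mul_mem {x y v w : A} (hv : v ∈ genIdeal x) (hw : w ∈ genIdeal y) :
    v * w ∈ genIdeal (x * y) := by
  have h1 : v * w ∈ genIdeal (x * w) := mul_mem_genIdeal_mul hv w
  have h2 : w * x ∈ genIdeal (y * x) := mul_mem_genIdeal_mul hw x
  rw [mul_comm w x, mul_comm y x] at h2
  exact genIdeal_subset h2 h1

/-- the sum of an ideal and a principal ideal -/
def addIdeal (I : Set A) (x : A) : Set A :=
  {z : A | ∃ u ∈ I, ∃ v ∈ genIdeal x, z ∈ madd u v}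

lemma zero_mem_of_isIdeal {I : Set A} (hI : IsIdeal I) : (0 : A) ∈ I := by
  obtain ⟨⟨c, hc⟩, -, hmulI⟩ := hI
  have := hmulI 0 c hc
  rwa [mul_comm, mul_zero'] at this

lemma subset_addIdeal {I : Set A} (hI : IsIdeal I) (x : A) : I ⊆ addIdeal I x :=
  fun u hu => ⟨u, hu, 0, zero_mem_genIdeal x, (mem_madd_zero u u).2 rfl⟩

lemma genIdeal_subset_addIdeal {I : Set A} (hI : IsIdeal I) (x : A) :
    genIdeal x ⊆ addIdeal I x :=
  fun v hv => ⟨0, zero_mem_of_isIdeal hI, v, hv, mem_madd_zero_left.2 rfl⟩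

lemma isIdeal_addIdeal {I : Set A} (hI : IsIdeal I) (x : A) : IsIdeal (addIdeal I x) := by
  obtain ⟨hne, haddI, hmulI⟩ := hI
  refine ⟨⟨0, subset_addIdeal ⟨hne, haddI, hmulI⟩ x (zero_mem_of_isIdeal ⟨hne, haddI, hmulI⟩)⟩,
    ?_, ?_⟩
  · rintro z ⟨u, hu, v, hv, hz⟩ z' ⟨u', hu', v', hv', hz'⟩ w hw
    -- reassociate (u+v)+(u'+v') into (u+u')+(v+v')
    obtain ⟨h, hh, hw1⟩ := madd_assoc u v z' z w hz hw
    -- hh : h ∈ madd v z', hw1 : w ∈ madd u h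
    obtain ⟨h₂, hh₂, hh2⟩ := madd_assoc' hh hz'
    -- hh₂ : h₂ ∈ madd v u', hh2 : h ∈ madd h₂ v'
    obtain ⟨h₃, hh₃, hw3⟩ := madd_assoc' hw1 hh2
    -- hh₃ : h₃ ∈ madd u h₂, hw3 : w ∈ madd h₃ v'
    rw [madd_comm] at hh₂
    obtain ⟨h₄, hh₄, hh4⟩ := madd_assoc' hh₃ hh₂
    -- hh₄ : h₄ ∈ madd u u', hh4 : h₃ ∈ madd h₄ v
    obtain ⟨k, hk, hwk⟩ := madd_assoc h₄ v v' h₃ w hh4 hw3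
    exact ⟨h₄, haddI u hu u' hu' hh₄, k, madd_subset_genIdeal hv hv' hk, hwk⟩
  · rintro t z ⟨u, hu, v, hv, hz⟩
    refine ⟨u * t, ?_, v * t, ?_, ?_⟩
    · rw [mul_comm]; exact hmulI t u hu
    · rw [mul_comm]; exact mul_mem_genIdeal hv t
    · rw [mul_comm t z]; exact madd_mul z u v t hz

lemma isIdeal_genIdeal (x : A) : IsIdeal (genIdeal x) :=
  ⟨⟨x, self_mem_genIdeal x⟩, fun u hu v hv => madd_subset_genIdeal hu hv,
    fun t u hu => mul_mem_genIdeal hu t⟩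

lemma pow_mem_of_prime {p : Set A} (hp : IsPrimeIdeal p) {x : A} {n : ℕ} (hn : 1 ≤ n)
    (h : x ^ n ∈ p) : x ∈ p := by
  induction n with
  | zero => omega
  | succ m ih =>
    rw [pow_succ] at h
    rcases hp.2.2 _ _ h with h' | h'
    · rcases Nat.eq_or_lt_of_le (Nat.zero_le m) with hm | hm
      · rw [← hm, pow_zero] at h'
        exact absurd h' hp.2.1
      · exact ih hm h'
    · exact h'

/-- main existence result: if no power of `a` lies in `genIdeal b`, there is a
prime ideal containing `b` and avoiding `a`. -/
lemma exists_prime_of_not_mem_radical {a b : A}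
    (h : a ∉ radical (genIdeal b)) :
    ∃ p : Set A, IsPrimeIdeal p ∧ b ∈ p ∧ a ∉ p := by
  set S : Set (Set A) := {I : Set A | IsIdeal I ∧ ∀ n : ℕ, a ^ n ∉ I} with hS
  have hb : genIdeal b ∈ S := by
    refine ⟨isIdeal_genIdeal b, fun n hn => ?_⟩
    rcases Nat.eq_or_lt_of_le (Nat.zero_le n) with hn0 | hn0
    · rw [← hn0, pow_zero] at hn
      have : a ∈ genIdeal b := by
        have := mul_mem_genIdeal hn a
        rwa [mul_one] at this
      exact h ⟨1, le_refl 1, by rwa [pow_one]⟩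
    · exact h ⟨n, hn0, hn⟩
  have hzorn : ∀ c ⊆ S, IsChain (· ⊆ ·) c → c.Nonempty → ∃ ub ∈ S, ∀ s ∈ c, s ⊆ ub := by
    rintro c hcS hchain ⟨I₀, hI₀⟩
    refine ⟨⋃₀ c, ⟨⟨⟨0, Set.mem_sUnion_of_mem (zero_mem_of_isIdeal (hcS hI₀).1) hI₀⟩,
      ?_, ?_⟩, ?_⟩, fun s hs => Set.subset_sUnion_of_mem hs⟩
    · rintro u ⟨I₁, hI₁, hu⟩ v ⟨I₂, hI₂, hv⟩ w hw
      rcases hchain.total hI₁ hI₂ with hle | hle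
      · exact Set.mem_sUnion_of_mem ((hcS hI₂).1.2.1 u (hle hu) v hv hw) hI₂
      · exact Set.mem_sUnion_of_mem ((hcS hI₁).1.2.1 u hu v (hle hv) hw) hI₁
    · rintro t v ⟨I₁, hI₁, hv⟩
      exact Set.mem_sUnion_of_mem ((hcS hI₁).1.2.2 t v hv) hI₁
    · rintro n ⟨I₁, hI₁, hmem⟩
      exact (hcS hI₁).2 n hmem
  obtain ⟨m, hbm, hmS, hmax⟩ := zorn_subset_nonempty S hzorn _ hb
  obtain ⟨hmI, hmav⟩ := hmS
  have hone : (1 : A) ∉ m := by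
    intro h1
    have := hmav 0
    rw [pow_zero] at this
    exact this h1
  refine ⟨m, ⟨hmI, hone, ?_⟩, hbm (self_mem_genIdeal b), fun ha => hmav 1 (by rwa [pow_one])⟩
  intro x y hxy
  by_contra hcon
  push_neg at hcon
  obtain ⟨hx, hy⟩ := hcon
  -- addIdeal m x strictly contains m, hence contains some a^n
  have key : ∀ z : A, z ∉ m → ∃ n : ℕ, a ^ n ∈ addIdeal m z := by
    intro z hz
    by_contra hav
    push_neg at hav
    have hJ : addIdeal m z ∈ S := ⟨isIdeal_addIdeal hmI z, hav⟩
    have := hmax hJ (subset_addIdeal hmI z)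
    exact hz (this (genIdeal_subset_addIdeal hmI z (self_mem_genIdeal z)))
  obtain ⟨n, u, hu, v, hv, hn⟩ := key x hx
  obtain ⟨k, u', hu', v', hv', hk⟩ := key y hy
  -- a^(n+k) ∈ m : contradiction
  apply hmav (n + k)
  rw [pow_add]
  have h1 : a ^ n * a ^ k ∈ madd (u * a ^ k) (v * a ^ k) := madd_mul _ u v (a ^ k) hn
  have h2 : a ^ k * v ∈ madd (u' * v) (v' * v) := madd_mul _ u' v' v hk
  have hu'v : u' * v ∈ m := by rw [mul_comm]; exact hmI.2.2 v u' hu'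
  have hv'v : v' * v ∈ m := by
    have : v' * v ∈ genIdeal (y * x) := genIdeal_mul_mem hv' hv
    rw [mul_comm y x] at this
    exact genIdeal_subset_of_mem_ideal hmI hxy this
  have hvk : v * a ^ k ∈ m := by
    rw [mul_comm]
    exact hmI.2.1 _ hu'v _ hv'v h2
  have huk : u * a ^ k ∈ m := by
    rw [mul_comm]; exact hmI.2.2 (a ^ k) u hu
  exact hmI.2.1 _ huk _ hvk h1

end Aux

end Multiring

/-- The conditions `D(a) ⊆ D(b)`, `√(a) ⊆ √(b)`, `a ∈ √(b)` and `S_b ⊆ S_a`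
are equivalent. -/
theorem basicOpen_subset_tfae {A : Type u} [Multiring A] (a b : A) :
    [(∀ p : Set A, Multiring.IsPrimeIdeal p → a ∉ p → b ∉ p),
     Multiring.radical (Multiring.genIdeal a) ⊆
       Multiring.radical (Multiring.genIdeal b),
     a ∈ Multiring.radical (Multiring.genIdeal b),
     Multiring.Sgen b ⊆ Multiring.Sgen a].TFAE := by
  open Multiring in
  tfae_have 1 → 3 := by
    intro h1
    by_contra hc
    obtain ⟨p, hp, hbp, hap⟩ := exists_prime_of_not_mem_radical hc
    exact h1 p hp hap hbp
  tfae_have 3 → 2 := by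
    rintro ⟨n, hn, han⟩ x ⟨m, hm, hxm⟩
    have h1 : (x ^ m) ^ n ∈ genIdeal (a ^ n) := pow_mem_genIdeal_pow hxm n hn
    have h2 : genIdeal (a ^ n) ⊆ genIdeal b := genIdeal_subset han
    exact ⟨m * n, Nat.one_le_iff_ne_zero.2 (by positivity), by
      rw [pow_mul]; exact h2 h1⟩
  tfae_have 2 → 3 := fun h2 => h2 ⟨1, le_refl 1, by rw [pow_one]; exact self_mem_genIdeal a⟩
  tfae_have 3 → 1 := by
    rintro ⟨n, hn, han⟩ p hp hap hbp
    have : a ^ n ∈ p := genIdeal_subset_of_mem_ideal hp.1 hbp han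
    exact hap (pow_mem_of_prime hp hn this)
  tfae_have 3 → 4 := by
    rintro ⟨n, hn, han⟩ x ⟨m, hbm⟩
    have h1 : (a ^ n) ^ m ∈ genIdeal (b ^ m) := by
      rcases Nat.eq_zero_or_pos m with rfl | hm
      · rw [pow_zero, pow_zero]
        have := mul_mem_genIdeal (self_mem_genIdeal (1 : A)) 1
        simpa using self_mem_genIdeal (1 : A)
      · exact pow_mem_genIdeal_pow han m hm
    exact ⟨n * m, by rw [pow_mul]; exact genIdeal_subset hbm h1⟩
  tfae_have 4 → 3 := by
    intro h4
    obtain ⟨n, han⟩ := h4 (show b ∈ Sgen b from ⟨1, by rw [pow_one]; exact self_mem_genIdeal b⟩)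
    rcases Nat.eq_zero_or_pos n with rfl | hn
    · rw [pow_zero] at han
      refine ⟨1, le_refl 1, ?_⟩
      rw [pow_one]
      have := mul_mem_genIdeal han a
      rwa [mul_one] at this
    · exact ⟨n, hn, han⟩
  tfae_finish
end

section
/- Let A be a hyperring. The following are equivalent: (i) √(0) = {0} and the topological space spec(A), equipped with the topology generated by the sets {D(a) : a ∈ A}, is a Boolean space (compact, Hausdorff and totally disconnected); (ii) for every a ∈ A there exists b ∈ A such that a = a²b. -/
universe u v

namespace VNAux

open Multiring Set TopologicalSpace

variable {A : Type u} [Multiring A]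

theorem mem_madd_comm {a b c : A} (h : a ∈ madd b c) : a ∈ madd c b := by
  rw [madd_comm]; exact h

theorem zero_mem_madd_neg (x : A) : (0 : A) ∈ madd (-x) x :=
  madd_rev_left x x 0 ((mem_madd_zero x x).2 rfl)

theorem eq_neg_of_zero_mem {x y : A} (h : (0 : A) ∈ madd y x) : y = -x :=
  (mem_madd_zero y (-x)).1 (mem_madd_comm (madd_rev_right 0 y x h))

theorem neg_neg' (x : A) : -(-x) = x :=
  (eq_neg_of_zero_mem (mem_madd_comm (zero_mem_madd_neg x))).symm

theorem zero_mul' (x : A) : (0 : A) * x = 0 := by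
  rw [mul_comm]; exact Multiring.mul_zero' x

theorem neg_mul' (x d : A) : (-x) * d = -(x * d) := by
  have h := madd_mul 0 (-x) x d (zero_mem_madd_neg x)
  rw [zero_mul'] at h
  exact eq_neg_of_zero_mem h

theorem self_mem_madd_zero (x : A) : x ∈ madd x 0 := (mem_madd_zero x x).2 rfl

theorem madd_assoc' {a b c h x : A} (hh : h ∈ madd b c) (hx : x ∈ madd a h) :
    ∃ g ∈ madd a b, x ∈ madd g c := by
  obtain ⟨k, hk, hxk⟩ := madd_assoc c b a h x (mem_madd_comm hh) (mem_madd_comm hx)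
  exact ⟨k, mem_madd_comm hk, mem_madd_comm hxk⟩

theorem ideal_zero_mem {I : Set A} (hI : IsIdeal I) : (0 : A) ∈ I := by
  obtain ⟨⟨i, hi⟩, -, hmul⟩ := hI
  have := hmul 0 i hi
  rwa [zero_mul'] at this

theorem isIdeal_singleton_zero : IsIdeal ({0} : Set A) := by
  refine ⟨⟨0, rfl⟩, ?_, ?_⟩
  · rintro a (rfl : a = 0) b (rfl : b = 0) z hz
    exact (mem_madd_zero z 0).1 hz
  · rintro a b (rfl : b = 0)
    exact Multiring.mul_zero' a

/-- `I + A·x` -/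
def Jset (I : Set A) (x : A) : Set A := {z | ∃ t : A, ∃ i ∈ I, z ∈ madd (t * x) i}

theorem mem_Jset_of_mem {I : Set A} {x z : A} (hz : z ∈ I) : z ∈ Jset I x :=
  ⟨0, z, hz, by rw [zero_mul']; exact mem_madd_comm (self_mem_madd_zero z)⟩

theorem self_mem_Jset {I : Set A} (hI : IsIdeal I) (x : A) : x ∈ Jset I x :=
  ⟨1, 0, ideal_zero_mem hI, by rw [one_mul]; exact self_mem_madd_zero x⟩

theorem Jset_isIdeal (hA : IsHyperring A) {I : Set A} (hI : IsIdeal I) (x : A) :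
    IsIdeal (Jset I x) := by
  obtain ⟨hne, hadd, hmul⟩ := id hI
  refine ⟨⟨0, mem_Jset_of_mem (ideal_zero_mem hI)⟩, ?_, ?_⟩
  · rintro z ⟨t, i, hi, hz⟩ z' ⟨t', i', hi', hz'⟩ w hw
    obtain ⟨h₁, hh₁, hw₁⟩ := madd_assoc (t * x) i z' z w hz hw
    obtain ⟨h₂, hh₂, hh₁'⟩ := madd_assoc (t' * x) i' i z' h₁ hz' (mem_madd_comm hh₁)
    obtain ⟨g, hg, hwg⟩ := madd_assoc' hh₁' hw₁
    obtain ⟨u, hu, rfl⟩ := hA g t t' x hg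
    exact ⟨u, h₂, hadd i' hi' i hi hh₂, hwg⟩
  · rintro a z ⟨t, i, hi, hz⟩
    have h := madd_mul z (t * x) i a hz
    refine ⟨t * a, i * a, ?_, ?_⟩
    · rw [mul_comm i a]; exact hmul a i hi
    · rw [mul_comm a z]
      have e1 : t * x * a = t * a * x := by
        rw [mul_assoc, mul_comm x a, ← mul_assoc]
      rwa [e1] at h

/-- the span of a list of generators -/
def spanList : List A → Set A
  | [] => {(0 : A)}
  | x :: l => Jset (spanList l) x

theorem spanList_isIdeal (hA : IsHyperring A) (l : List A) : IsIdeal (spanList l) := by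
  induction l with
  | nil => exact isIdeal_singleton_zero
  | cons x l ih => exact Jset_isIdeal hA ih x

theorem mem_spanList_of_mem (hA : IsHyperring A) {x : A} {l : List A} (h : x ∈ l) :
    x ∈ spanList l := by
  induction l with
  | nil => cases h
  | cons y l ih =>
    rcases List.mem_cons.1 h with rfl | h
    · exact self_mem_Jset (spanList_isIdeal hA l) x
    · exact mem_Jset_of_mem (ih h)

theorem spanList_subset {p : Set A} (hp : IsIdeal p) :
    ∀ {l : List A}, (∀ x ∈ l, x ∈ p) → spanList l ⊆ p := by
  intro l
  induction l with
  | nil =>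
    rintro - z (rfl : z = 0); exact ideal_zero_mem hp
  | cons x l ih =>
    rintro h z ⟨t, i, hi, hz⟩
    exact hp.2.1 (t * x) (hp.2.2 t x (h x (List.mem_cons_self (a := x) (l := l)))) i
      (ih (fun y hy => h y (List.mem_cons_of_mem x hy)) hi) hz

theorem spanList_mul {l : List A} {z : A} (d : A) (hz : z ∈ spanList l) :
    z * d ∈ spanList (l.map (· * d)) := by
  induction l generalizing z with
  | nil =>
    obtain rfl : z = 0 := hz
    show (0 : A) * d ∈ ({0} : Set A)
    rw [zero_mul']; rfl
  | cons x l ih =>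
    obtain ⟨t, i, hi, hz⟩ := hz
    have h := madd_mul z (t * x) i d hz
    exact ⟨t, i * d, ih hi, by rwa [mul_assoc] at h⟩

theorem spanList_zero : ∀ {l : List A}, (∀ x ∈ l, x = (0 : A)) → ∀ {z : A}, z ∈ spanList l → z = 0 := by
  intro l
  induction l with
  | nil => rintro - z (rfl : z = 0); rfl
  | cons x l ih =>
    rintro h z ⟨t, i, hi, hz⟩
    have hx : x = 0 := h x (List.mem_cons_self (a := x) (l := l))
    rw [hx, Multiring.mul_zero'] at hz
    have : z = i := (mem_madd_zero z i).1 (mem_madd_comm hz)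
    exact this.trans (ih (fun y hy => h y (List.mem_cons_of_mem x hy)) hi)

theorem spanList_append_left (hA : IsHyperring A) {l l' : List A} :
    spanList l ⊆ spanList (l ++ l') := by
  induction l with
  | nil =>
    rintro z (rfl : z = 0)
    exact ideal_zero_mem (spanList_isIdeal hA l')
  | cons x l ih =>
    rintro z ⟨t, i, hi, hz⟩
    exact ⟨t, i, ih hi, hz⟩

theorem spanList_append_right (hA : IsHyperring A) {l l' : List A} :
    spanList l' ⊆ spanList (l ++ l') := by
  induction l with
  | nil => exact fun z hz => hz
  | cons x l ih => exact fun z hz => mem_Jset_of_mem (ih hz)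

theorem mem_of_pow_mem {p : Set A} (hp : IsPrimeIdeal p) {a : A} :
    ∀ {n : ℕ}, a ^ n ∈ p → a ∈ p := by
  intro n
  induction n with
  | zero => rw [pow_zero]; exact fun h => absurd h hp.2.1
  | succ n ih =>
    rw [pow_succ]
    intro h
    rcases hp.2.2 _ _ h with h | h
    · exact ih h
    · exact h

theorem exists_prime (hA : IsHyperring A) {I : Set A} (hI : IsIdeal I) (a : A)
    (h : ∀ n : ℕ, a ^ n ∉ I) : ∃ p : Set A, IsPrimeIdeal p ∧ I ⊆ p ∧ a ∉ p := by
  set S : Set (Set A) := {J | IsIdeal J ∧ I ⊆ J ∧ ∀ n : ℕ, a ^ n ∉ J} with hS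
  have hzorn : ∀ c ⊆ S, IsChain (· ⊆ ·) c → c.Nonempty → ∃ ub ∈ S, ∀ s ∈ c, s ⊆ ub := by
    intro c hcS hchain ⟨J₀, hJ₀⟩
    refine ⟨⋃₀ c, ⟨⟨⟨0, J₀, hJ₀, ideal_zero_mem (hcS hJ₀).1⟩, ?_, ?_⟩, ?_, ?_⟩, fun s hs => subset_sUnion_of_mem hs⟩
    · rintro x ⟨J₁, hJ₁, hx⟩ y ⟨J₂, hJ₂, hy⟩ z hz
      rcases hchain.total hJ₁ hJ₂ with hle | hle
      · exact ⟨J₂, hJ₂, (hcS hJ₂).1.2.1 x (hle hx) y hy hz⟩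
      · exact ⟨J₁, hJ₁, (hcS hJ₁).1.2.1 x hx y (hle hy) hz⟩
    · rintro t x ⟨J₁, hJ₁, hx⟩
      exact ⟨J₁, hJ₁, (hcS hJ₁).1.2.2 t x hx⟩
    · exact (hcS hJ₀).2.1.trans (subset_sUnion_of_mem hJ₀)
    · rintro n ⟨J₁, hJ₁, hx⟩
      exact (hcS hJ₁).2.2 n hx
  obtain ⟨m, hIm, hmS, hmax⟩ := zorn_subset_nonempty S hzorn I ⟨hI, subset_rfl, h⟩
  refine ⟨m, ⟨hmS.1, ?_, ?_⟩, hIm, ?_⟩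
  · have := hmS.2.2 0; rwa [pow_zero] at this
  · -- primality
    intro x y hxy
    by_contra hcon
    push_neg at hcon
    obtain ⟨hx, hy⟩ := hcon
    have key : ∀ w : A, w ∉ m → ∃ n : ℕ, a ^ n ∈ Jset m w := by
      intro w hw
      by_contra hk
      push_neg at hk
      have hJS : Jset m w ∈ S :=
        ⟨Jset_isIdeal hA hmS.1 w, hmS.2.1.trans (fun z hz => mem_Jset_of_mem hz), hk⟩
      have := hmax hJS (fun z hz => mem_Jset_of_mem hz)
      exact hw (this (self_mem_Jset hmS.1 w))
    obtain ⟨n, t, i, hi, h1⟩ := key x hx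
    obtain ⟨nn, s, j, hj, h2⟩ := key y hy
    have h3 := madd_mul (a ^ n) (t * x) i (a ^ nn) h1
    have h4 := madd_mul (a ^ nn) (s * y) j (t * x) h2
    have hm1 : s * y * (t * x) ∈ m := by
      have e1 : s * y * (t * x) = s * t * (x * y) := by
        rw [mul_assoc, mul_assoc, mul_comm y (t * x), mul_assoc t x y]
      rw [e1]; exact hmS.1.2.2 (s * t) (x * y) hxy
    have hm2 : j * (t * x) ∈ m := by
      rw [mul_comm]; exact hmS.1.2.2 (t * x) j hj
    have hm3 : a ^ nn * (t * x) ∈ m := hmS.1.2.1 _ hm1 _ hm2 h4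
    have hm4 : t * x * a ^ nn ∈ m := by rwa [mul_comm]
    have hm5 : i * a ^ nn ∈ m := by rw [mul_comm]; exact hmS.1.2.2 (a ^ nn) i hi
    have hm6 : a ^ n * a ^ nn ∈ m := hmS.1.2.1 _ hm4 _ hm5 h3
    rw [← pow_add] at hm6
    exact hmS.2.2 (n + nn) hm6
  · intro ha
    have := hmS.2.2 1
    rw [pow_one] at this
    exact this ha

end VNAux

namespace VNAux

open Multiring Set TopologicalSpace

variable {A : Type u} [Multiring A]

theorem specBasis :
    IsTopologicalBasis {U : Set (Spec A) | ∃ a : A, U = {p : Spec A | a ∉ p.1}} := by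
  refine ⟨?_, ?_, rfl⟩
  · rintro t₁ ⟨c₁, rfl⟩ t₂ ⟨c₂, rfl⟩ p ⟨h1, h2⟩
    refine ⟨{q : Spec A | c₁ * c₂ ∉ q.1}, ⟨c₁ * c₂, rfl⟩, ?_, ?_⟩
    · intro h
      rcases p.2.2.2 c₁ c₂ h with h | h
      · exact h1 h
      · exact h2 h
    · rintro q hq
      constructor
      · intro hc₁
        exact hq (by rw [mul_comm]; exact q.2.1.2.2 c₂ c₁ hc₁)
      · intro hc₂
        exact hq (q.2.1.2.2 c₁ c₂ hc₂)
  · apply eq_univ_of_forall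
    intro p
    exact ⟨{q : Spec A | (1 : A) ∉ q.1}, ⟨1, rfl⟩, p.2.2.1⟩

theorem isOpen_D (a : A) : IsOpen {p : Spec A | a ∉ p.1} :=
  specBasis.isOpen ⟨a, rfl⟩

theorem isCompact_D (hA : IsHyperring A) (a : A) :
    IsCompact {p : Spec A | a ∉ p.1} := by
  classical
  refine isCompact_of_finite_subcover fun {ι} U hUo hsU => ?_
  set G : Set A := {c | ∃ i : ι, {q : Spec A | c ∉ q.1} ⊆ U i} with hG
  set I : Set A := {z | ∃ l : List A, (∀ c ∈ l, c ∈ G) ∧ z ∈ spanList l} with hI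
  have hIdeal : IsIdeal I := by
    refine ⟨⟨0, [], by simp, rfl⟩, ?_, ?_⟩
    · rintro x ⟨l₁, hl₁, hx⟩ y ⟨l₂, hl₂, hy⟩ z hz
      refine ⟨l₁ ++ l₂, ?_, ?_⟩
      · intro c hc
        rcases List.mem_append.1 hc with h | h
        · exact hl₁ c h
        · exact hl₂ c h
      · exact (spanList_isIdeal hA (l₁ ++ l₂)).2.1 x (spanList_append_left hA hx) y
          (spanList_append_right hA hy) hz
    · rintro t x ⟨l₁, hl₁, hx⟩
      exact ⟨l₁, hl₁, (spanList_isIdeal hA l₁).2.2 t x hx⟩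
  by_cases hcase : ∀ n : ℕ, a ^ n ∉ I
  · exfalso
    obtain ⟨p, hp, hIp, hap⟩ := exists_prime hA hIdeal a hcase
    have hmem : (⟨p, hp⟩ : Spec A) ∈ ⋃ i, U i := hsU hap
    obtain ⟨i, hiV⟩ := mem_iUnion.1 hmem
    obtain ⟨v, ⟨c, rfl⟩, hpv, hvU⟩ := specBasis.exists_subset_of_mem_open hiV (hUo i)
    have hcG : c ∈ G := ⟨i, hvU⟩
    have hcI : c ∈ I := ⟨[c], by simpa using hcG, mem_spanList_of_mem hA (List.mem_singleton.2 rfl)⟩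
    exact hpv (hIp hcI)
  · push_neg at hcase
    obtain ⟨n, l, hlG, hal⟩ := hcase
    have pick : ∀ c ∈ l, ∃ i : ι, {q : Spec A | c ∉ q.1} ⊆ U i := fun c hc => hlG c hc
    refine ⟨(l.attach.map fun c => (pick c.1 c.2).choose).toFinset, ?_⟩
    intro q hq
    have hqn : a ^ n ∉ q.1 := fun h => hq (mem_of_pow_mem q.2 h)
    have : ∃ c ∈ l, c ∉ q.1 := by
      by_contra hcon
      push_neg at hcon
      exact hqn (spanList_subset q.2.1 hcon hal)
    obtain ⟨c, hcl, hcq⟩ := this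
    have hi := (pick c hcl).choose_spec
    have hmemfin : (pick c hcl).choose ∈ (l.attach.map fun c => (pick c.1 c.2).choose).toFinset := by
      rw [List.mem_toFinset, List.mem_map]
      exact ⟨⟨c, hcl⟩, List.mem_attach _ _, rfl⟩
    exact mem_biUnion hmemfin (hi hcq)

theorem compactSpace_spec (hA : IsHyperring A) : CompactSpace (Spec A) := by
  rw [← isCompact_univ_iff]
  have : (univ : Set (Spec A)) = {p : Spec A | (1 : A) ∉ p.1} := by
    apply (eq_univ_of_forall ?_).symm
    exact fun p => p.2.2.1
  rw [this]
  exact isCompact_D hA 1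

/-- the separation lemma in the von Neumann case -/
theorem separation (hA : IsHyperring A) (hvn : ∀ a : A, ∃ b : A, a = a * a * b)
    {p q : Spec A} {a : A} (hap : a ∈ p.1) (haq : a ∉ q.1) :
    ∃ u v : Set (Spec A), IsOpen u ∧ IsOpen v ∧ p ∈ u ∧ q ∈ v ∧
      u ∪ v = univ ∧ u ∩ v = ∅ := by
  obtain ⟨b, hb⟩ := hvn a
  set e : A := a * b with he
  have hea : e * a = a := by
    rw [he, mul_assoc, mul_comm b a, ← mul_assoc, ← hb]
  have h0 : (0 : A) ∈ madd (1 * a) ((-e) * a) := by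
    rw [one_mul, neg_mul', hea]
    exact mem_madd_comm (zero_mem_madd_neg a)
  obtain ⟨h, hh, hha⟩ := hA 0 1 (-e) a h0
  have h1eh : (1 : A) ∈ madd e h := by
    have := madd_rev_right h 1 (-e) hh
    rw [neg_neg'] at this
    exact mem_madd_comm this
  have hep : e ∈ p.1 := by
    rw [he, mul_comm]
    exact p.2.1.2.2 b a hap
  have hhp : h ∉ p.1 := by
    intro hmem
    exact p.2.2.1 (p.2.1.2.1 e hep h hmem h1eh)
  refine ⟨{r : Spec A | h ∉ r.1}, {r : Spec A | a ∉ r.1}, isOpen_D h, isOpen_D a,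
    hhp, haq, ?_, ?_⟩
  · apply eq_univ_of_forall
    intro r
    by_cases har : a ∈ r.1
    · left
      intro hhr
      have her : e ∈ r.1 := by rw [he, mul_comm]; exact r.2.1.2.2 b a har
      exact r.2.2.1 (r.2.1.2.1 e her h hhr h1eh)
    · right; exact har
  · apply eq_empty_of_forall_notMem
    rintro r ⟨hhr, har⟩
    have : h * a ∈ r.1 := by rw [← hha]; exact ideal_zero_mem r.2.1
    rcases r.2.2.2 h a this with h | h
    · exact hhr h
    · exact har h

end VNAux

/-- A hyperring `A` satisfies `√0 = 0` with `spec(A)` a Boolean space iff every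
`a ∈ A` can be written `a = a²b`. -/
theorem vonNeumann_characterization {A : Type u} [Multiring A]
    (hA : Multiring.IsHyperring A) :
    (Multiring.radical ({0} : Set A) = {0} ∧
      CompactSpace (Multiring.Spec A) ∧ T2Space (Multiring.Spec A) ∧
      TotallyDisconnectedSpace (Multiring.Spec A)) ↔
    (∀ a : A, ∃ b : A, a = a * a * b) := by
  classical
  constructor
  · rintro ⟨hrad, hcomp, ht2, -⟩ a
    by_cases h10 : (1 : A) = 0
    · refine ⟨0, ?_⟩
      have ha : a = 0 := by
        calc a = a * 1 := (mul_one a).symm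
        _ = a * 0 := by rw [h10]
        _ = 0 := Multiring.mul_zero' a
      rw [ha, VNAux.zero_mul', VNAux.zero_mul']
    · haveI := hcomp; haveI := ht2
      have hDco : IsCompact {p : Multiring.Spec A | a ∉ p.1} := VNAux.isCompact_D hA a
      have hDcl : IsClosed {p : Multiring.Spec A | a ∉ p.1} := hDco.isClosed
      set V : Set (Multiring.Spec A) := {p : Multiring.Spec A | a ∈ p.1} with hV
      have hVcompl : V = {p : Multiring.Spec A | a ∉ p.1}ᶜ := by
        ext p; simp [hV]
      have hVopen : IsOpen V := by rw [hVcompl]; exact hDcl.isOpen_compl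
      have hVclosed : IsClosed V := by
        rw [hVcompl]; exact (VNAux.isOpen_D a).isClosed_compl
      have hVcomp : IsCompact V := hVclosed.isCompact
      have hcov : V ⊆ ⋃ c : {c : A // {q : Multiring.Spec A | c ∉ q.1} ⊆ V},
          {q : Multiring.Spec A | c.1 ∉ q.1} := by
        intro p hp
        obtain ⟨v, ⟨c, rfl⟩, hpv, hvV⟩ :=
          VNAux.specBasis.exists_subset_of_mem_open hp hVopen
        exact Set.mem_iUnion.2 ⟨⟨c, hvV⟩, hpv⟩
      obtain ⟨t, ht⟩ := hVcomp.elim_finite_subcover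
        (fun c : {c : A // {q : Multiring.Spec A | c ∉ q.1} ⊆ V} =>
          {q : Multiring.Spec A | c.1 ∉ q.1})
        (fun c => VNAux.isOpen_D c.1) hcov
      set cs : List A := t.toList.map Subtype.val with hcs
      have hsub : ∀ c ∈ cs, {q : Multiring.Spec A | c ∉ q.1} ⊆ V := by
        intro c hc
        rw [hcs] at hc
        obtain ⟨⟨c', hc'⟩, -, rfl⟩ := List.mem_map.1 hc
        exact hc'
      have hzero : ∀ c ∈ cs, a * c = 0 := by
        intro c hc
        by_contra hac
        have hpow : ∀ n : ℕ, (a * c) ^ n ∉ ({0} : Set A) := by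
          intro n h
          have h0 : (a * c) ^ n = 0 := h
          match n with
          | 0 => rw [pow_zero] at h0; exact h10 h0
          | Nat.succ m =>
            have hmem : a * c ∈ Multiring.radical ({0} : Set A) :=
              ⟨m + 1, by omega, h0⟩
            rw [hrad] at hmem
            exact hac hmem
        obtain ⟨r, hr, -, hacr⟩ :=
          VNAux.exists_prime hA VNAux.isIdeal_singleton_zero (a * c) hpow
        apply hacr
        by_cases har : a ∈ r
        · rw [mul_comm]; exact hr.1.2.2 c a har
        · have hcr : c ∈ r := by
            by_contra hcr
            exact har (hsub c hc (show (⟨r, hr⟩ : Multiring.Spec A) ∈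
              {q : Multiring.Spec A | c ∉ q.1} from hcr))
          exact hr.1.2.2 a c hcr
      have h1span : (1 : A) ∈ VNAux.spanList (a :: cs) := by
        by_contra h1
        have hpow : ∀ n : ℕ, (1 : A) ^ n ∉ VNAux.spanList (a :: cs) := by
          intro n; rw [one_pow]; exact h1
        obtain ⟨p, hp, hsp, -⟩ :=
          VNAux.exists_prime hA (VNAux.spanList_isIdeal hA (a :: cs)) 1 hpow
        have hap : a ∈ p := hsp (VNAux.mem_spanList_of_mem hA (List.mem_cons_self (a := a) (l := cs)))
        have hPV : (⟨p, hp⟩ : Multiring.Spec A) ∈ V := hap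
        obtain ⟨c, hct, hcp⟩ := Set.mem_iUnion₂.1 (ht hPV)
        have hccs : c.1 ∈ cs := by
          rw [hcs]
          exact List.mem_map.2 ⟨c, Finset.mem_toList.2 hct, rfl⟩
        exact hcp (hsp (VNAux.mem_spanList_of_mem hA (List.mem_cons_of_mem a hccs)))
      have hmul := VNAux.spanList_mul a h1span
      rw [one_mul, List.map_cons] at hmul
      obtain ⟨t0, i, hi, hmem⟩ := hmul
      have hi0 : i = 0 := by
        refine VNAux.spanList_zero ?_ hi
        intro x hx
        obtain ⟨c, hc, rfl⟩ := List.mem_map.1 hx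
        rw [mul_comm]
        exact hzero c hc
      rw [hi0] at hmem
      have hfin : a = t0 * (a * a) := (Multiring.mem_madd_zero _ _).1 hmem
      exact ⟨t0, hfin.trans (mul_comm t0 (a * a))⟩
  · intro hvn
    have hrad : Multiring.radical ({0} : Set A) = {0} := by
      apply Set.eq_of_subset_of_subset
      · rintro x ⟨n, hn1, hxn⟩
        have hxn0 : x ^ n = 0 := hxn
        obtain ⟨b, hb⟩ := hvn x
        have key : ∀ k : ℕ, x = x ^ (k + 1) * b ^ k := by
          intro k
          induction k with
          | zero => simp
          | succ m ih =>
            calc x = x * x * b := hb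
            _ = (x ^ (m + 1) * b ^ m) * x * b := by rw [← ih]
            _ = x ^ (m + 1 + 1) * b ^ (m + 1) := by
                rw [pow_succ x (m + 1), pow_succ b m]
                simp only [mul_assoc, mul_comm, mul_left_comm]
        obtain ⟨m, rfl⟩ : ∃ m, n = m + 1 := ⟨n - 1, by omega⟩
        have hx0 : x = 0 := by
          have hk := key m
          rw [hxn0, VNAux.zero_mul'] at hk
          exact hk
        exact hx0
      · rintro x (rfl : x = 0)
        exact ⟨1, le_refl 1, by rw [pow_one]; rfl⟩
    haveI hcs : CompactSpace (Multiring.Spec A) := VNAux.compactSpace_spec hA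
    have sep : ∀ p q : Multiring.Spec A, p ≠ q →
        ∃ u v : Set (Multiring.Spec A), IsOpen u ∧ IsOpen v ∧ p ∈ u ∧ q ∈ v ∧
          u ∪ v = Set.univ ∧ u ∩ v = ∅ := by
      intro p q hpq
      have hne : p.1 ≠ q.1 := fun h => hpq (Subtype.ext h)
      have hex : ∃ a : A, (a ∈ p.1 ∧ a ∉ q.1) ∨ (a ∈ q.1 ∧ a ∉ p.1) := by
        by_contra hcon
        push_neg at hcon
        exact hne (Set.ext fun a => ⟨(hcon a).1, (hcon a).2⟩)
      obtain ⟨a, h | h⟩ := hex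
      · exact VNAux.separation hA hvn h.1 h.2
      · obtain ⟨u, v, hu, hv, hqu, hpv, huv, hdisj⟩ :=
          VNAux.separation hA hvn h.1 h.2
        exact ⟨v, u, hv, hu, hpv, hqu, by rw [Set.union_comm]; exact huv,
          by rw [Set.inter_comm]; exact hdisj⟩
    haveI htsep : TotallySeparatedSpace (Multiring.Spec A) := by
      constructor
      intro p _ q _ hpq
      obtain ⟨u, v, hu, hv, hpu, hqv, huv, hdisj⟩ := sep p q hpq
      exact ⟨u, v, hu, hv, hpu, hqv, by rw [huv],
        Set.disjoint_iff_inter_eq_empty.2 hdisj⟩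
    haveI ht2 : T2Space (Multiring.Spec A) := by
      constructor
      intro p q hpq
      obtain ⟨u, v, hu, hv, hpu, hqv, -, hdisj⟩ := sep p q hpq
      exact ⟨u, v, hu, hv, hpu, hqv, Set.disjoint_iff_inter_eq_empty.2 hdisj⟩
    exact ⟨hrad, hcs, ht2, inferInstance⟩
end

section
/- Let A be a von Neumann hyperring. The following are equivalent: (a) e + eᶜ = {1} for every idempotent e ∈ A; (b) for all a,b,c ∈ A, a ∈ b+c holds in A if and only if for every prime ideal p of A there exists v ∉ p with av ∈ bv+cv. -/
universe u v

namespace Multiring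

variable {A : Type u} [Multiring A]

/-! ### Basic multiring lemmas -/

lemma mem_madd_self_zero (a : A) : a ∈ madd a 0 := (mem_madd_zero a a).2 rfl

lemma zero_mem_madd_neg (a : A) : (0:A) ∈ madd (-a) a :=
  madd_rev_left _ _ _ (mem_madd_self_zero a)

lemma mr_neg_neg (a : A) : -(-a) = a := by
  have h := madd_rev_left _ _ _ (zero_mem_madd_neg a)
  exact ((mem_madd_zero _ _).1 h).symm

lemma mr_zero_mul (a : A) : (0:A) * a = 0 := by rw [mul_comm]; exact mul_zero' a

lemma mr_neg_mul (a b : A) : (-a) * b = -(a * b) := by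
  have h1 := madd_mul _ _ _ b (zero_mem_madd_neg a)
  rw [mr_zero_mul] at h1
  have h2 := madd_rev_right _ _ _ h1
  rw [madd_comm] at h2
  exact (mem_madd_zero _ _).1 h2

/-- rotation: from `x ∈ p + (q + r)` deduce `x ∈ q + (r + p)`. -/
lemma mr_rot {x p k q r : A} (h1 : x ∈ madd p k) (h2 : k ∈ madd q r) :
    ∃ k', k' ∈ madd r p ∧ x ∈ madd q k' := by
  rw [madd_comm] at h1
  obtain ⟨h, hh, hx⟩ := madd_assoc q r p k x h2 h1
  exact ⟨h, hh, hx⟩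

/-- the medial rearrangement `(p₁+p₂) + (q₁+q₂) ⊆ (p₁+q₁) + (p₂+q₂)`. -/
lemma mr_medial {z p q p1 p2 q1 q2 : A} (hz : z ∈ madd p q)
    (hp : p ∈ madd p1 p2) (hq : q ∈ madd q1 q2) :
    ∃ α ∈ madd p1 q1, ∃ β ∈ madd p2 q2, z ∈ madd α β := by
  obtain ⟨k, hk, hz1⟩ := mr_rot hz hq
  obtain ⟨β, hβ, hk1⟩ := mr_rot hk hp
  obtain ⟨m, hm, hz2⟩ := mr_rot hz1 hk1
  obtain ⟨α, hα, hz3⟩ := mr_rot hz2 hm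
  rw [madd_comm] at hα hz3
  exact ⟨α, hα, β, hβ, hz3⟩

lemma mr_zero_mem {I : Set A} (hI : IsIdeal I) : (0:A) ∈ I := by
  obtain ⟨⟨m, hm⟩, -, hmul⟩ := hI
  have := hmul 0 m hm
  rwa [mr_zero_mul] at this

/-! ### Complements of idempotents -/

/-- In a hyperring, every idempotent has a complement. -/
lemma mr_compl (hH : IsHyperring A) {e : A} (he : e * e = e) :
    ∃ x, x ∈ madd 1 (-e) ∧ e * x = 0 := by
  have h0 : (0:A) ∈ madd (1 * e) ((-e) * e) := by
    rw [one_mul, mr_neg_mul, he, madd_comm]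
    exact zero_mem_madd_neg e
  obtain ⟨x, hx, hxe⟩ := hH 0 1 (-e) e h0
  exact ⟨x, hx, by rw [mul_comm]; exact hxe.symm⟩

lemma mr_xx {e x : A} (hx1 : x ∈ madd 1 (-e)) (hex : e * x = 0) : x * x = x := by
  have h := madd_mul _ _ _ x hx1
  rw [one_mul, mr_neg_mul, mul_comm e x, mul_comm x x] at h
  rw [mul_comm x e, hex] at h
  have h0 : -(0:A) = 0 := ((mem_madd_zero _ _).1 (zero_mem_madd_neg 0)).symm
  rw [h0] at h
  exact (mem_madd_zero _ _).1 h

/-! ### Rigidity from the geometric hypothesis -/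

section Rigidity

variable (hH : IsHyperring A) {e x : A} (hg : madd e x = {1})

include hH hg

lemma mr_G1 (u : A) : madd (e * u) (x * u) = {u} := by
  ext w
  constructor
  · intro hw
    obtain ⟨s, hs, hw'⟩ := hH w e x u hw
    rw [hg, Set.mem_singleton_iff] at hs
    rw [Set.mem_singleton_iff, hw', hs, one_mul]
  · intro hw
    rw [Set.mem_singleton_iff] at hw
    have h1 : (1:A) ∈ madd e x := by rw [hg]; rfl
    have := madd_mul 1 e x u h1
    rw [one_mul] at this
    rw [hw]; exact this

lemma mr_G2 {w w' : A} (h1 : e * w = e * w') (h2 : x * w = x * w') : w = w' := by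
  have hw : w ∈ madd (e * w) (x * w) := by
    rw [mr_G1 hH hg w]; rfl
  rw [h1, h2, mr_G1 hH hg w', Set.mem_singleton_iff] at hw
  exact hw

omit hH in
lemma mr_sec (he : e * e = e) (hex : e * x = 0)
    {u v w : A} (hw : w ∈ madd (e * u) (x * v)) : e * w = e * u ∧ x * w = x * v := by
  have hxx : x * x = x := by
    have hx1 : x ∈ madd 1 (-e) := by
      have h1 : (1:A) ∈ madd e x := by rw [hg]; rfl
      have := madd_rev_left 1 e x h1
      rwa [madd_comm] at this
    exact mr_xx hx1 hex
  constructor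
  · have h := madd_mul w (e*u) (x*v) e hw
    have e1 : (e*u)*e = e*u := by
      rw [show (e*u)*e = (e*e)*u by ac_rfl, he]
    have e2 : (x*v)*e = 0 := by
      rw [show (x*v)*e = (e*x)*v by ac_rfl, hex, mr_zero_mul]
    rw [e1, e2] at h
    rw [mul_comm e w]
    exact (mem_madd_zero _ _).1 h
  · have h := madd_mul w (e*u) (x*v) x hw
    have e1 : (e*u)*x = 0 := by
      rw [show (e*u)*x = (e*x)*u by ac_rfl, hex, mr_zero_mul]
    have e2 : (x*v)*x = x*v := by
      rw [show (x*v)*x = (x*x)*v by ac_rfl, hxx]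
    rw [e1, e2, madd_comm] at h
    rw [mul_comm x w]
    exact (mem_madd_zero _ _).1 h

lemma mr_uniq (he : e * e = e) (hex : e * x = 0)
    {u v w w' : A} (hw : w ∈ madd (e * u) (x * v)) (hw' : w' ∈ madd (e * u) (x * v)) :
    w = w' := by
  obtain ⟨h1, h2⟩ := mr_sec hg he hex hw
  obtain ⟨h1', h2'⟩ := mr_sec hg he hex hw'
  exact mr_G2 hH hg (h1.trans h1'.symm) (h2.trans h2'.symm)

end Rigidity

/-! ### Joining good idempotents -/

lemma mr_join (hH : IsHyperring A) (a b c : A)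
    {e x f : A} (he : e*e = e) (hx1 : x ∈ madd 1 (-e)) (hex : e*x = 0)
    (hg : madd e x = {1}) (hf : f*f = f)
    (hge : a*e ∈ madd (b*e) (c*e)) (hgf : a*f ∈ madd (b*f) (c*f)) :
    ∃ g, g*g = g ∧ (a*g ∈ madd (b*g) (c*g)) ∧ e*g = e ∧ f*g = f := by
  have hxx : x*x = x := mr_xx hx1 hex
  have hxe : x*e = 0 := by rw [mul_comm]; exact hex
  obtain ⟨g, hgmem⟩ := madd_nonempty e (x*f)
  -- e*g = e
  have heg : e*g = e := by
    have h := madd_mul g e (x*f) e hgmem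
    have e2 : (x*f)*e = 0 := by
      rw [show (x*f)*e = (x*e)*f by ac_rfl, hxe, mr_zero_mul]
    rw [he, e2] at h
    rw [mul_comm e g]
    exact (mem_madd_zero _ _).1 h
  -- x*g = x*f
  have hxg : x*g = x*f := by
    have h := madd_mul g e (x*f) x hgmem
    have e1 : (x*f)*x = x*f := by
      rw [show (x*f)*x = (x*x)*f by ac_rfl, hxx]
    rw [hex, e1, madd_comm] at h
    rw [mul_comm x g]
    exact (mem_madd_zero _ _).1 h
  -- g idempotent
  have hgg : g*g = g := by
    apply mr_G2 hH hg
    · calc e*(g*g) = (e*g)*g := by ac_rfl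
        _ = e*g := by rw [heg, heg]
    · calc x*(g*g) = (x*g)*g := by ac_rfl
        _ = (x*f)*g := by rw [hxg]
        _ = (x*g)*f := by ac_rfl
        _ = (x*f)*f := by rw [hxg]
        _ = x*(f*f) := by ac_rfl
        _ = x*f := by rw [hf]
        _ = x*g := hxg.symm
  -- f*g = f
  have hfg : f*g = f := by
    apply mr_G2 hH hg
    · calc e*(f*g) = (e*g)*f := by ac_rfl
        _ = e*f := by rw [heg]
    · calc x*(f*g) = (x*g)*f := by ac_rfl
        _ = (x*f)*f := by rw [hxg]
        _ = x*(f*f) := by ac_rfl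
        _ = x*f := by rw [hf]
  -- g is good
  have hXmem : a*(x*f) ∈ madd (b*(x*f)) (c*(x*f)) := by
    have h := madd_mul (a*f) (b*f) (c*f) x hgf
    rw [show (a*f)*x = a*(x*f) by ac_rfl, show (b*f)*x = b*(x*f) by ac_rfl,
      show (c*f)*x = c*(x*f) by ac_rfl] at h
    exact h
  have hag : a*g ∈ madd (a*e) (a*(x*f)) := by
    have h := madd_mul g e (x*f) a hgmem
    rw [show g*a = a*g by ac_rfl, show e*a = a*e by ac_rfl,
      show (x*f)*a = a*(x*f) by ac_rfl] at h
    exact h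
  obtain ⟨α, hα, β, hβ, habm⟩ := mr_medial hag hge hXmem
  -- α = b*g, β = c*g
  have hbg : b*g ∈ madd (b*e) (b*(x*f)) := by
    have h := madd_mul g e (x*f) b hgmem
    rw [show g*b = b*g by ac_rfl, show e*b = b*e by ac_rfl,
      show (x*f)*b = b*(x*f) by ac_rfl] at h
    exact h
  have hcg : c*g ∈ madd (c*e) (c*(x*f)) := by
    have h := madd_mul g e (x*f) c hgmem
    rw [show g*c = c*g by ac_rfl, show e*c = c*e by ac_rfl,
      show (x*f)*c = c*(x*f) by ac_rfl] at h
    exact h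
  have hset_b : madd (b*e) (b*(x*f)) = madd (e*b) (x*(b*f)) := by
    rw [show b*e = e*b by ac_rfl, show b*(x*f) = x*(b*f) by ac_rfl]
  have hset_c : madd (c*e) (c*(x*f)) = madd (e*c) (x*(c*f)) := by
    rw [show c*e = e*c by ac_rfl, show c*(x*f) = x*(c*f) by ac_rfl]
  rw [hset_b] at hα hbg
  rw [hset_c] at hβ hcg
  have hαeq : α = b*g := mr_uniq hH hg he hex hα hbg
  have hβeq : β = c*g := mr_uniq hH hg he hex hβ hcg
  rw [hαeq, hβeq] at habm
  exact ⟨g, hgg, habm, by rw [mul_comm e g] at heg ⊢; exact heg, hfg⟩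

/-- the support idempotent of a good element is good -/
lemma mr_support (hVN : ∀ a : A, ∃ b, a = a*a*b) (a b c : A) {y : A}
    (hy : a*y ∈ madd (b*y) (c*y)) :
    ∃ e, e*e = e ∧ y*e = y ∧ a*e ∈ madd (b*e) (c*e) := by
  obtain ⟨w, hw⟩ := hVN y
  refine ⟨y*w, ?_, ?_, ?_⟩
  · calc (y*w)*(y*w) = (y*y*w)*w := by ac_rfl
      _ = y*w := by rw [← hw]
  · calc y*(y*w) = y*y*w := by ac_rfl
      _ = y := hw.symm
  · have h := madd_mul (a*y) (b*y) (c*y) w hy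
    rw [show (a*y)*w = a*(y*w) by ac_rfl, show (b*y)*w = b*(y*w) by ac_rfl,
      show (c*y)*w = c*(y*w) by ac_rfl] at h
    exact h

lemma mr_join_list (hH : IsHyperring A) (hVN : ∀ a : A, ∃ b, a = a*a*b)
    (hgeo : ∀ e x : A, e * e = e → x ∈ madd 1 (-e) → e * x = 0 → madd e x = {1})
    (a b c : A) :
    ∀ l : List A, (∀ v ∈ l, a*v ∈ madd (b*v) (c*v)) →
      ∃ g, g*g = g ∧ a*g ∈ madd (b*g) (c*g) ∧ ∀ v ∈ l, v*g = v := by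
  intro l
  induction l with
  | nil =>
    intro _
    refine ⟨0, mul_zero' 0, ?_, by simp⟩
    rw [mul_zero' a, mul_zero' b, mul_zero' c]
    exact mem_madd_self_zero 0
  | cons y l ih =>
    intro h
    obtain ⟨g', hg'g', hgoodg', hlg'⟩ := ih (fun v hv => h v (List.mem_cons_of_mem y hv))
    obtain ⟨e, hee, hye, hgoode⟩ := mr_support hVN a b c (h y (List.mem_cons_self))
    obtain ⟨x, hx1, hex⟩ := mr_compl hH hee
    have hg := hgeo e x hee hx1 hex
    obtain ⟨g, hgg, hgood, heg, hg'g⟩ := mr_join hH a b c hee hx1 hex hg hg'g' hgoode hgoodg'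
    refine ⟨g, hgg, hgood, ?_⟩
    intro v hv
    rcases List.mem_cons.1 hv with rfl | hv'
    · calc v*g = (v*e)*g := by rw [hye]
        _ = v*(e*g) := by ac_rfl
        _ = v*e := by rw [heg]
        _ = v := hye
    · calc v*g = (v*g')*g := by rw [hlg' v hv']
        _ = v*(g'*g) := by ac_rfl
        _ = v*g' := by rw [hg'g]
        _ = v := hlg' v hv'

/-! ### listSum lemmas -/

lemma mr_listSum_mul {l : List A} {s : A} (hs : s ∈ listSum l) (d : A) :
    s * d ∈ listSum (l.map (· * d)) := by
  induction l generalizing s with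
  | nil =>
    have : s = 0 := by simpa [listSum] using hs
    rw [this, mr_zero_mul]
    simp [listSum]
  | cons y l ih =>
    obtain ⟨r, hr, hsr⟩ := hs
    exact ⟨r*d, ih hr, madd_mul s y r d hsr⟩

lemma mr_listSum_zero {l : List A} (hl : ∀ v ∈ l, v = (0:A)) {s : A}
    (hs : s ∈ listSum l) : s = 0 := by
  induction l generalizing s with
  | nil => simpa [listSum] using hs
  | cons y l ih =>
    obtain ⟨r, hr, hsr⟩ := hs
    rw [hl y (List.mem_cons_self), ih (fun v hv => hl v (List.mem_cons_of_mem y hv)) hr]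
      at hsr
    exact (mem_madd_zero _ _).1 hsr

lemma mr_listSum_append {l l' : List A} {z' : A} (hz' : z' ∈ listSum l') :
    ∀ {z t : A}, z ∈ listSum l → t ∈ madd z z' → t ∈ listSum (l ++ l') := by
  induction l with
  | nil =>
    intro z t hz ht
    have : z = 0 := by simpa [listSum] using hz
    rw [this, madd_comm] at ht
    have : t = z' := (mem_madd_zero _ _).1 ht
    rw [List.nil_append, this]
    exact hz'
  | cons y l ih =>
    intro z t hz ht
    obtain ⟨r, hr, hzr⟩ := hz
    obtain ⟨h, hh, hth⟩ := madd_assoc y r z' z t hzr ht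
    exact ⟨h, ih hr hh, hth⟩

/-! ### Existence of prime ideals -/

lemma mr_exists_prime (hH : IsHyperring A) {I : Set A} (hI : IsIdeal I)
    (h1 : (1:A) ∉ I) : ∃ p, IsPrimeIdeal p ∧ I ⊆ p := by
  obtain ⟨M, hIM, hM⟩ := zorn_subset_nonempty {J : Set A | IsIdeal J ∧ (1:A) ∉ J}
    (fun c hcS hchain hcne => by
      obtain ⟨J0, hJ0⟩ := hcne
      refine ⟨⋃₀ c, ⟨⟨?_, ?_, ?_⟩, ?_⟩, fun s hs => Set.subset_sUnion_of_mem hs⟩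
      · obtain ⟨m, hm⟩ := (hcS hJ0).1.1
        exact ⟨m, J0, hJ0, hm⟩
      · rintro u ⟨J1, hJ1, hu⟩ v ⟨J2, hJ2, hv⟩
        rcases hchain.total hJ1 hJ2 with hle | hle
        · exact fun t ht => ⟨J2, hJ2, (hcS hJ2).1.2.1 u (hle hu) v hv ht⟩
        · exact fun t ht => ⟨J1, hJ1, (hcS hJ1).1.2.1 u hu v (hle hv) ht⟩
      · rintro r v ⟨J1, hJ1, hv⟩
        exact ⟨J1, hJ1, (hcS hJ1).1.2.2 r v hv⟩
      · rintro ⟨J1, hJ1, h1J⟩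
        exact (hcS hJ1).2 h1J)
    I ⟨hI, h1⟩
  have hMideal : IsIdeal M := hM.prop.1
  have h1M : (1:A) ∉ M := hM.prop.2
  refine ⟨M, ⟨hMideal, h1M, ?_⟩, hIM⟩
  intro u v huv
  by_contra hcon
  push_neg at hcon
  obtain ⟨hu, hv⟩ := hcon
  have key : ∀ w, w ∉ M → ∃ s, ∃ m ∈ M, (1:A) ∈ madd (s*w) m := by
    intro w hw
    set J := {z : A | ∃ s, ∃ m ∈ M, z ∈ madd (s*w) m} with hJdef
    have hJideal : IsIdeal J := by
      refine ⟨⟨w, 1, 0, mr_zero_mem hMideal, by rw [one_mul]; exact mem_madd_self_zero w⟩,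
        ?_, ?_⟩
      · rintro z ⟨s, m, hm, hz⟩ z' ⟨s', m', hm', hz'⟩ t ht
        obtain ⟨α, hα, β, hβ, htm⟩ := mr_medial ht hz hz'
        obtain ⟨σ, hσ, hαeq⟩ := hH α s s' w hα
        exact ⟨σ, β, hMideal.2.1 m hm m' hm' hβ, by rw [← hαeq]; exact htm⟩
      · rintro r z ⟨s, m, hm, hz⟩
        have h := madd_mul z (s*w) m r hz
        rw [show (s*w)*r = (s*r)*w by ac_rfl] at h
        refine ⟨s*r, m*r, ?_, by rw [mul_comm r z]; exact h⟩
        rw [mul_comm m r]; exact hMideal.2.2 r m hm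
    have hMJ : M ⊆ J := by
      intro m hm
      exact ⟨0, m, hm, by rw [mr_zero_mul, madd_comm]; exact mem_madd_self_zero m⟩
    have hwJ : w ∈ J := ⟨1, 0, mr_zero_mem hMideal, by rw [one_mul]; exact mem_madd_self_zero w⟩
    by_cases h1J : (1:A) ∈ J
    · exact h1J
    · exact absurd (hM.2 ⟨hJideal, h1J⟩ hMJ hwJ) hw
  obtain ⟨s, m, hm, h1u⟩ := key u hu
  obtain ⟨t, m2, hm2, h1v⟩ := key v hv
  have htv : t*v ∈ M := by
    have h := madd_mul 1 (s*u) m (t*v) h1u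
    rw [one_mul, show (s*u)*(t*v) = (s*t)*(u*v) by ac_rfl] at h
    have hm3 : (s*t)*(u*v) ∈ M := hMideal.2.2 (s*t) (u*v) huv
    have hm4 : m*(t*v) ∈ M := by
      rw [mul_comm]; exact hMideal.2.2 (t*v) m hm
    exact hMideal.2.1 _ hm3 _ hm4 h
  exact h1M (hMideal.2.1 _ htv _ hm2 h1v)

end Multiring

/-- In a von Neumann hyperring, `e + eᶜ = {1}` for every idempotent `e` iff
sums can be checked locally: `a ∈ b + c` iff for every prime ideal `p` there is
`v ∉ p` with `av ∈ bv + cv`. -/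
theorem geometric_iff_local_sums {A : Type u} [Multiring A]
    (hA : Multiring.IsVonNeumann A) :
    (∀ e x : A, e * e = e → x ∈ Multiring.madd 1 (-e) → e * x = 0 →
      Multiring.madd e x = {1}) ↔
    (∀ a b c : A, a ∈ Multiring.madd b c ↔
      ∀ p : Set A, Multiring.IsPrimeIdeal p →
        ∃ v : A, v ∉ p ∧ a * v ∈ Multiring.madd (b * v) (c * v)) := by
  open Multiring in
  obtain ⟨hH, hVN⟩ := hA
  constructor
  · -- geometric → local sums
    intro hgeo a b c
    constructor
    · intro hab p hp
      refine ⟨1, hp.2.1, ?_⟩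
      rwa [mul_one, mul_one, mul_one]
    · intro hloc
      -- the ideal generated by the good elements
      set I := {z : A | ∃ l : List A, (∀ v ∈ l, a*v ∈ madd (b*v) (c*v)) ∧ z ∈ listSum l}
        with hIdef
      have hIideal : IsIdeal I := by
        refine ⟨⟨0, [], by simp, by simp [listSum]⟩, ?_, ?_⟩
        · rintro z ⟨l, hl, hz⟩ z' ⟨l', hl', hz'⟩ t ht
          refine ⟨l ++ l', ?_, mr_listSum_append hz' hz ht⟩
          intro v hv
          rcases List.mem_append.1 hv with h | h
          exacts [hl v h, hl' v h]
        · rintro r z ⟨l, hl, hz⟩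
          refine ⟨l.map (· * r), ?_, ?_⟩
          · intro v hv
            obtain ⟨v', hv', rfl⟩ := List.mem_map.1 hv
            have h := madd_mul (a*v') (b*v') (c*v') r (hl v' hv')
            rw [show (a*v')*r = a*(v'*r) by ac_rfl, show (b*v')*r = b*(v'*r) by ac_rfl,
              show (c*v')*r = c*(v'*r) by ac_rfl] at h
            exact h
          · rw [mul_comm r z]
            exact mr_listSum_mul hz r
      have h1I : (1:A) ∈ I := by
        by_contra h1I
        obtain ⟨p, hp, hIp⟩ := mr_exists_prime hH hIideal h1I
        obtain ⟨v, hvp, hv⟩ := hloc p hp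
        refine hvp (hIp ⟨[v], ?_, ?_⟩)
        · intro v' hv'
          rw [List.mem_singleton.1 hv']
          exact hv
        · exact ⟨0, by simp [listSum], mem_madd_self_zero v⟩
      obtain ⟨l, hlgood, h1l⟩ := h1I
      obtain ⟨g, hgg, hgood, hlg⟩ := mr_join_list hH hVN hgeo a b c l hlgood
      obtain ⟨x, hx1, hgx⟩ := mr_compl hH hgg
      have hgx1 := hgeo g x hgg hx1 hgx
      have hx0 : x = 0 := by
        have hx' : (1:A) * x ∈ listSum (l.map (· * x)) := mr_listSum_mul h1l x
        rw [one_mul] at hx'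
        refine mr_listSum_zero ?_ hx'
        intro v hv
        obtain ⟨v', hv', rfl⟩ := List.mem_map.1 hv
        calc v'*x = (v'*g)*x := by rw [hlg v' hv']
          _ = v'*(g*x) := by ac_rfl
          _ = 0 := by rw [hgx, mul_zero']
      have hg1 : g = 1 := by
        have hmem : g ∈ madd g x := by
          rw [hx0]; exact mem_madd_self_zero g
        rw [hgx1, Set.mem_singleton_iff] at hmem
        exact hmem
      rw [hg1, mul_one, mul_one, mul_one] at hgood
      exact hgood
  · -- local sums → geometric
    intro hloc e x he hx1 hex
    have hxx : x * x = x := mr_xx hx1 hex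
    have h1mem : (1:A) ∈ madd e x := by
      have h := madd_rev_right x 1 (-e) hx1
      rw [mr_neg_neg, madd_comm] at h
      exact h
    apply Set.eq_singleton_iff_unique_mem.2
    refine ⟨h1mem, ?_⟩
    intro y hy
    have hy10 : y ∈ madd 1 0 := by
      apply (hloc y 1 0).2
      intro p hp
      obtain ⟨hpI, hp1, _⟩ := hp
      by_cases hxp : x ∈ p
      · have hep : e ∉ p := fun hep => hp1 (hpI.2.1 e hep x hxp h1mem)
        refine ⟨e, hep, ?_⟩
        have h := madd_mul y e x e hy
        rw [he, mul_comm x e, hex] at h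
        rwa [one_mul, mr_zero_mul]
      · refine ⟨x, hxp, ?_⟩
        have h := madd_mul y e x x hy
        rw [hex, hxx, madd_comm] at h
        rwa [one_mul, mr_zero_mul]
    exact (Multiring.mem_madd_zero y 1).1 hy10
end

section
/- Let A be a von Neumann hyperring and S ⊆ A a multiplicative set. Then S is a von Neumann subgroup of A if and only if the Marshall quotient A/ₘS is a geometric von Neumann hyperring (i.e., A/ₘS is a von Neumann hyperring in which e + eᶜ = {1} for every idempotent e). -/
universe u v

section Aux

open Multiring

variable {A : Type u} [Multiring A]

private lemma mem_congr {a a' b b' c c' : A} (h : a ∈ madd b c)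
    (ha : a = a') (hb : b = b') (hc : c = c') : a' ∈ madd b' c' := by
  subst ha; subst hb; subst hc; exact h

private lemma zero_mem_neg (a : A) : (0 : A) ∈ madd (-a) a :=
  madd_rev_left a a 0 ((mem_madd_zero a a).2 rfl)

private lemma mneg_neg (a : A) : -(-a) = a := by
  have h := madd_rev_left 0 (-a) a (zero_mem_neg a)
  exact ((mem_madd_zero a (-(-a))).1 h).symm

private lemma mzero_mul (a : A) : (0 : A) * a = 0 := by
  rw [mul_comm]; exact Multiring.mul_zero' a

private lemma mneg_mul (a b : A) : (-a) * b = -(a * b) := by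
  have h0 : (0 : A) * b ∈ madd ((-a) * b) (a * b) := madd_mul 0 (-a) a b (zero_mem_neg a)
  have h0' : (0 : A) ∈ madd ((-a) * b) (a * b) := by
    rwa [mzero_mul] at h0
  have h := madd_rev_right 0 ((-a) * b) (a * b) h0'
  rw [madd_comm] at h
  exact (mem_madd_zero _ _).1 h

private lemma mneg_zero : -(0 : A) = 0 := by
  have := mneg_mul (0 : A) (0 : A)
  rw [Multiring.mul_zero', Multiring.mul_zero'] at this
  exact this.symm

/-- existence of the complement of an idempotent in a hyperring -/
private lemma exists_compl (hH : IsHyperring A) {e : A} (he : e * e = e) :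
    ∃ x : A, x ∈ madd 1 (-e) ∧ e * x = 0 := by
  have h0 : (0 : A) ∈ madd ((-1) * e) (e * e) := by
    refine mem_congr (zero_mem_neg e) rfl ?_ he.symm
    rw [mneg_mul, one_mul]
  obtain ⟨a, ha, h0a⟩ := hH 0 (-1) e e h0
  refine ⟨-a, ?_, ?_⟩
  · -- a ∈ madd (-1) e  ⇒  -a ∈ madd 1 (-e)
    have h1 : (-1 : A) ∈ madd a (-e) := madd_rev_right a (-1) e ha
    have h2 : (-e : A) ∈ madd (-a) (-1) := madd_rev_left (-1) a (-e) h1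
    have h3 : (-a : A) ∈ madd (-e) (-(-1)) := madd_rev_right (-e) (-a) (-1) h2
    rw [mneg_neg] at h3
    rwa [madd_comm] at h3
  · rw [mul_comm, mneg_mul, ← h0a, mneg_zero]

private lemma eq_of_mem_zero {a b : A} (h : a ∈ madd b 0) : a = b :=
  (mem_madd_zero a b).1 h

end Aux

/-- For a von Neumann hyperring `A` and a multiplicative set `S`, `S` is a von
Neumann subgroup iff the Marshall quotient `A/ₘS` is a geometric von Neumann
hyperring. -/
theorem vnSubgroup_iff_quotient_geometric {A : Type u} [Multiring A]
    (hA : Multiring.IsVonNeumann A) (S : Set A)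
    (hS : Multiring.IsMultiplicative S) :
    Multiring.IsVNSubgroup S ↔ Multiring.QuotGeometricVN S := by
  classical
  obtain ⟨hH, hReg⟩ := hA
  constructor
  · -- subgroup → geometric quotient
    rintro ⟨-, hsub⟩
    refine ⟨?_, ?_, ?_⟩
    · -- the quotient is a hyperring
      rintro x b c d ⟨s, hs, t, ht, u, hu, hm⟩
      have hm' : x * s ∈ Multiring.madd ((b * t) * d) ((c * u) * d) :=
        mem_congr hm rfl (by simp [mul_comm, mul_assoc, mul_left_comm])
          (by simp [mul_comm, mul_assoc, mul_left_comm])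
      obtain ⟨a, ha, hxa⟩ := hH (x * s) (b * t) (c * u) d hm'
      exact ⟨a, ⟨1, hS.1, t, ht, u, hu, by rwa [mul_one]⟩,
        ⟨s, hs, 1, hS.1, by rwa [mul_one]⟩⟩
    · -- the quotient is von Neumann regular
      intro a
      obtain ⟨b, hb⟩ := hReg a
      exact ⟨b, 1, hS.1, 1, hS.1, by rw [mul_one, mul_one]; exact hb⟩
    · -- the quotient is geometric
      rintro e x ⟨s₀, hs₀, t₀, ht₀, hee⟩ ⟨s, hs, t, ht, u, hu, hxm⟩ ⟨s', hs', t', ht', hex⟩ y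
      obtain ⟨b, hb⟩ := hReg e
      set ε := e * b with hε
      have f1 : ε * ε = ε := by
        calc ε * ε = (e * e * b) * b := by rw [hε]; simp [mul_comm, mul_assoc, mul_left_comm]
        _ = e * b := by rw [← hb]
      have f2 : ε * e = e := by
        calc ε * e = e * e * b := by rw [hε]; simp [mul_comm, mul_assoc, mul_left_comm]
        _ = e := hb.symm
      have hex0 : (e * x) * s' = 0 := by rw [hex, mzero_mul]
      have f3 : ε * t₀ = e * s₀ := by
        calc ε * t₀ = (e * t₀) * b := by rw [hε]; simp [mul_comm, mul_assoc, mul_left_comm]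
        _ = ((e * e) * s₀) * b := by rw [hee]
        _ = (e * e * b) * s₀ := by simp [mul_comm, mul_assoc, mul_left_comm]
        _ = e * s₀ := by rw [← hb]
      obtain ⟨c, hc1, hc2⟩ := exists_compl hH f1
      have g1 : x * ε * s' = 0 := by
        calc x * ε * s' = ((e * x) * s') * b := by
              rw [hε]; simp [mul_comm, mul_assoc, mul_left_comm]
        _ = 0 := by rw [hex0, mzero_mul]
      have g2 : e * c = 0 := by
        calc e * c = (ε * e) * c := by rw [f2]
        _ = (ε * c) * e := by simp [mul_comm, mul_assoc, mul_left_comm]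
        _ = 0 * e := by rw [hc2]
        _ = 0 := mzero_mul e
      have g3 : x * s * c = t * c := by
        have h := Multiring.madd_mul (x * s) (1 * t) ((-e) * u) c hxm
        have hneg : ((-e) * u) * c = 0 := by
          calc ((-e) * u) * c = -((e * u) * c) := by rw [mneg_mul, mneg_mul]
          _ = -((e * c) * u) := congrArg Neg.neg (by
                simp [mul_comm, mul_assoc, mul_left_comm])
          _ = 0 := by rw [g2, mzero_mul, mneg_zero]
        exact eq_of_mem_zero (mem_congr h rfl (by rw [one_mul]) hneg)
      have g4 : (1 : A) ∈ Multiring.madd ε c := by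
        have h := Multiring.madd_rev_right c 1 (-ε) hc1
        rw [mneg_neg] at h
        rwa [Multiring.madd_comm] at h
      have g5 : x * (s * s') = c * (t * s') := by
        have h := Multiring.madd_mul 1 ε c (x * (s * s')) g4
        rw [one_mul] at h
        have h' := mem_congr h rfl
          (show ε * (x * (s * s')) = 0 by
            calc ε * (x * (s * s')) = (x * ε * s') * s := by
                  simp [mul_comm, mul_assoc, mul_left_comm]
            _ = 0 := by rw [g1, mzero_mul])
          (show c * (x * (s * s')) = c * (t * s') by
            calc c * (x * (s * s')) = (x * s * c) * s' := by
                  simp [mul_comm, mul_assoc, mul_left_comm]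
            _ = (t * c) * s' := by rw [g3]
            _ = c * (t * s') := by simp [mul_comm, mul_assoc, mul_left_comm])
        rw [Multiring.madd_comm] at h'
        exact eq_of_mem_zero h'
      constructor
      · rintro ⟨s₁, hs₁, t₁, ht₁, u₁, hu₁, hym⟩
        have h := Multiring.madd_mul _ _ _ (s₀ * (s * s')) hym
        have hmem : y * (s₁ * (s₀ * (s * s'))) ∈
            Multiring.madd (ε * (t₀ * (t₁ * (s * s')))) (c * ((t * s') * (u₁ * s₀))) := by
          refine mem_congr h (by simp [mul_comm, mul_assoc, mul_left_comm]) ?_ ?_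
          · calc (e * t₁) * (s₀ * (s * s')) = (e * s₀) * (t₁ * (s * s')) := by
                  simp [mul_comm, mul_assoc, mul_left_comm]
            _ = (ε * t₀) * (t₁ * (s * s')) := by rw [f3]
            _ = ε * (t₀ * (t₁ * (s * s'))) := mul_assoc ε t₀ _
          · calc (x * u₁) * (s₀ * (s * s')) = (x * (s * s')) * (u₁ * s₀) := by
                  simp [mul_comm, mul_assoc, mul_left_comm]
            _ = (c * (t * s')) * (u₁ * s₀) := by rw [g5]
            _ = c * ((t * s') * (u₁ * s₀)) := mul_assoc c _ _
        obtain ⟨σ, hσ, hyσ⟩ := hsub ε y c f1 hc1 hc2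
          ⟨s₁ * (s₀ * (s * s')), hS.2 _ hs₁ _ (hS.2 _ hs₀ _ (hS.2 _ hs _ hs')),
           t₀ * (t₁ * (s * s')), hS.2 _ ht₀ _ (hS.2 _ ht₁ _ (hS.2 _ hs _ hs')),
           (t * s') * (u₁ * s₀), hS.2 _ (hS.2 _ ht _ hs') _ (hS.2 _ hu₁ _ hs₀), hmem⟩
        exact ⟨σ, hσ, y * σ, hyσ, (one_mul _).symm⟩
      · rintro ⟨s₂, hs₂, t₂, ht₂, hy⟩
        rw [one_mul] at hy
        have h := Multiring.madd_mul 1 ε c (t₀ * (t * (s' * t₂))) g4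
        rw [one_mul] at h
        refine ⟨s₂ * (t₀ * (t * s')), hS.2 _ hs₂ _ (hS.2 _ ht₀ _ (hS.2 _ ht _ hs')),
          s₀ * (t * (s' * t₂)), hS.2 _ hs₀ _ (hS.2 _ ht _ (hS.2 _ hs' _ ht₂)),
          (s * s') * (t₀ * t₂), hS.2 _ (hS.2 _ hs _ hs') _ (hS.2 _ ht₀ _ ht₂),
          mem_congr h ?_ ?_ ?_⟩
        · calc t₀ * (t * (s' * t₂)) = t₂ * (t₀ * (t * s')) := by
                simp [mul_comm, mul_assoc, mul_left_comm]
          _ = (y * s₂) * (t₀ * (t * s')) := by rw [hy]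
          _ = y * (s₂ * (t₀ * (t * s'))) := mul_assoc y s₂ _
        · calc ε * (t₀ * (t * (s' * t₂))) = (ε * t₀) * (t * (s' * t₂)) :=
                (mul_assoc ε t₀ _).symm
          _ = (e * s₀) * (t * (s' * t₂)) := by rw [f3]
          _ = e * (s₀ * (t * (s' * t₂))) := mul_assoc e s₀ _
        · calc c * (t₀ * (t * (s' * t₂))) = (c * (t * s')) * (t₀ * t₂) := by
                simp [mul_comm, mul_assoc, mul_left_comm]
          _ = (x * (s * s')) * (t₀ * t₂) := by rw [g5]
          _ = x * ((s * s') * (t₀ * t₂)) := mul_assoc x _ _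
  · -- geometric quotient → subgroup
    rintro ⟨-, -, hgeom⟩
    refine ⟨hS, ?_⟩
    rintro a x ac ha hac haac hx
    have h1 : Multiring.simM S (a * a) a := ⟨1, hS.1, 1, hS.1, by rw [mul_one, mul_one, ha]⟩
    have h2 : Multiring.qmemM S ac 1 (-a) :=
      ⟨1, hS.1, 1, hS.1, 1, hS.1, by simpa using hac⟩
    have h3 : Multiring.simM S (a * ac) 0 :=
      ⟨1, hS.1, 1, hS.1, by simp only [mul_one]; exact haac⟩
    obtain ⟨σ, hσS, τ, hτS, hστ⟩ := (hgeom a ac h1 h2 h3 x).mp hx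
    rw [one_mul] at hστ
    exact ⟨σ, hσS, by rw [hστ]; exact hτS⟩
end

section
/- Let A be a multiring. Then A is a real reduced multiring such that for every a ∈ A there exists x ∈ A with ax = 0 and x ∈ 1+(-a²), if and only if A is a hyperring that is a real reduced multiring. -/
universe u v

namespace MultiringProof

open Multiring

variable {A : Type u} [Multiring A]

lemma zero_mem_madd_neg (a : A) : (0 : A) ∈ madd a (-a) := by
  have h : a ∈ madd a 0 := (mem_madd_zero a a).2 rfl
  have h2 := madd_rev_left a a 0 h
  rwa [madd_comm] at h2

lemma nneg (a : A) : -(-a) = a := by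
  have h := madd_rev_right 0 a (-a) (zero_mem_madd_neg a)
  rw [madd_comm] at h
  exact ((mem_madd_zero a (-(-a))).1 h).symm

lemma nzero : -(0 : A) = 0 := by
  have h : (0 : A) ∈ madd 0 0 := (mem_madd_zero 0 0).2 rfl
  have h2 := madd_rev_left 0 0 0 h
  exact ((mem_madd_zero (0 : A) (-0)).1 h2).symm

lemma nmul (a b : A) : (-a) * b = -(a * b) := by
  have h := madd_mul 0 a (-a) b (zero_mem_madd_neg a)
  rw [mul_comm (0 : A) b, mul_zero'] at h
  have h2 := madd_rev_left 0 (a * b) ((-a) * b) h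
  exact (mem_madd_zero _ _).1 h2

lemma neg_mem {a b c : A} (h : a ∈ madd b c) : -a ∈ madd (-b) (-c) := by
  have h1 := madd_rev_right a b c h
  have h2 := madd_rev_left b a (-c) h1
  have h3 := madd_rev_right (-c) (-a) b h2
  rwa [madd_comm] at h3

/-- Key singleton lemma: if `z` is an idempotent complementary to `d*d`,
then `q*(d*d) + q*z = {q}`. -/
lemma sing (h3 : ∀ a b : A, madd a (a * b * b) = {a}) (d z q t : A)
    (hee : d * d * (d * d) = d * d) (hzz : z * z = z) (hez : d * d * z = 0)
    (h1 : (1 : A) ∈ madd (d * d) z)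
    (ht : t ∈ madd (q * (d * d)) (q * z)) : t = q := by
  -- t*(d*d) = q*(d*d)
  have hte : t * (d * d) = q * (d * d) := by
    have h := madd_mul t (q * (d * d)) (q * z) (d * d) ht
    rw [mul_assoc q (d*d) (d*d), hee, mul_assoc q z (d*d), mul_comm z (d*d), hez,
      mul_zero'] at h
    exact (mem_madd_zero _ _).1 h
  have htz : t * z = q * z := by
    have h := madd_mul t (q * (d * d)) (q * z) z ht
    rw [mul_assoc q (d*d) z, hez, mul_zero', mul_assoc, hzz] at h
    rw [madd_comm] at h
    exact (mem_madd_zero _ _).1 h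
  -- q ∈ q*(d*d) + q*z
  have hq : q ∈ madd (q * (d * d)) (q * z) := by
    have h := madd_mul 1 (d * d) z q h1
    rwa [one_mul, mul_comm (d*d) q, mul_comm z q] at h
  -- madd x (x*(d*d)) = {x} and madd x (x*z) = {x}
  have hxe : ∀ x : A, madd x (x * (d * d)) = {x} := fun x => by
    have := h3 x d; rwa [mul_assoc] at this
  have hxz : ∀ x : A, madd x (x * z) = {x} := fun x => by
    have := h3 x z
    rw [mul_assoc, hzz] at this
    exact this
  -- any y ∈ madd t q equals t
  obtain ⟨y, hy⟩ := madd_nonempty t q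
  have hyt : y = t := by
    have hq' : q ∈ madd (t * (d * d)) (t * z) := by rw [hte, htz]; exact hq
    have hy' : y ∈ madd q t := by rwa [madd_comm] at hy
    obtain ⟨h, hh, hyh⟩ := madd_assoc (t * (d*d)) (t * z) t q y hq' hy'
    rw [madd_comm, hxz] at hh
    rw [hh] at hyh
    rw [madd_comm, hxe] at hyh
    exact hyh
  have hyq : y = q := by
    have hy' : y ∈ madd q t := by rwa [madd_comm] at hy
    obtain ⟨h, hh, hyh⟩ := madd_assoc (q * (d*d)) (q * z) q t y ht hy
    rw [madd_comm, hxz] at hh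
    rw [hh] at hyh
    rw [madd_comm, hxe] at hyh
    exact hyh
  rw [← hyt, hyq]

open Multiring in
theorem main {A : Type u} [Multiring A] :
    (Multiring.IsRealReduced A ∧
      ∀ a : A, ∃ x : A, a * x = 0 ∧ x ∈ Multiring.madd 1 (-(a * a))) ↔
    (Multiring.IsHyperring A ∧ Multiring.IsRealReduced A) := by
  constructor
  · rintro ⟨hr, hc⟩
    refine ⟨?_, hr⟩
    intro x b c d hx
    obtain ⟨z, hdz, hzmem⟩ := hc d
    have hcube : ∀ a : A, a * a * a = a := hr.2.1
    have h3 : ∀ a b : A, madd a (a * b * b) = {a} := hr.2.2.1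
    have hee : d * d * (d * d) = d * d := by
      rw [← mul_assoc, hcube]
    have hez : d * d * z = 0 := by rw [mul_assoc, hdz, mul_zero']
    have hzz : z * z = z := by
      have h := madd_mul z 1 (-(d * d)) z hzmem
      rw [one_mul, nmul, mul_comm (d*d) z, mul_comm z z] at h
      rw [show z * (d * d) = 0 from by rw [mul_comm, hez], nzero] at h
      exact (mem_madd_zero _ _).1 h
    have h1 : (1 : A) ∈ madd (d * d) z := by
      have h := madd_rev_right z 1 (-(d * d)) hzmem
      rw [nneg] at h
      rwa [madd_comm] at h
    -- x * z = 0
    have hxz : x * z = 0 := by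
      have h := madd_mul x (b * d) (c * d) z hx
      rw [mul_assoc b d z, hdz, mul_zero', mul_assoc c d z, hdz, mul_zero'] at h
      exact (mem_madd_zero _ _).1 h
    -- x * (d*d) = x
    have hxe : x * (d * d) = x := by
      have h := madd_mul z 1 (-(d * d)) x hzmem
      rw [mul_comm z x, hxz, one_mul, nmul, mul_comm (d*d) x] at h
      have h2 := madd_rev_right 0 x (-(x * (d * d))) h
      rw [nneg, madd_comm] at h2
      exact ((mem_madd_zero _ _).1 h2).symm
    -- w = x * d ∈ b*(d*d) + c*(d*d)
    have hw : x * d ∈ madd (b * (d * d)) (c * (d * d)) := by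
      have h := madd_mul x (b * d) (c * d) d hx
      rwa [mul_assoc b d d, mul_assoc c d d] at h
    obtain ⟨v, hv⟩ := madd_nonempty (b * z) (c * z)
    obtain ⟨a, ha⟩ := madd_nonempty (x * d) v
    have hvd : v * d = 0 := by
      have h := madd_mul v (b * z) (c * z) d hv
      rw [mul_assoc b z d, mul_comm z d, hdz, mul_zero',
        mul_assoc c z d, mul_comm z d, hdz, mul_zero'] at h
      exact (mem_madd_zero _ _).1 h
    have had : a * d = x := by
      have h := madd_mul a (x * d) v d ha
      rw [hvd, mul_assoc x d d, hxe] at h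
      exact (mem_madd_zero _ _).1 h
    refine ⟨a, ?_, had.symm⟩
    -- rearrange: a ∈ (b*e + c*e) + (b*z + c*z) into b + c
    obtain ⟨k1, hk1, hak1⟩ := madd_assoc (b * (d*d)) (c * (d*d)) v (x * d) a hw ha
    have hk1' : k1 ∈ madd v (c * (d*d)) := by rwa [madd_comm] at hk1
    obtain ⟨k2, hk2, hk1b⟩ := madd_assoc (b * z) (c * z) (c * (d*d)) v k1 hv hk1'
    have hk2c : k2 = c := by
      refine sing h3 d z c k2 hee hzz hez h1 ?_
      rwa [madd_comm] at hk2
    rw [hk2c] at hk1b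
    -- now a ∈ b*(d*d) + k1, k1 ∈ b*z + c
    have hak1' : a ∈ madd k1 (b * (d*d)) := by rwa [madd_comm] at hak1
    obtain ⟨k3, hk3, hak3⟩ := madd_assoc (b * z) c (b * (d*d)) k1 a hk1b hak1'
    have hak3' : a ∈ madd k3 (b * z) := by rwa [madd_comm] at hak3
    obtain ⟨k4, hk4, hak4⟩ := madd_assoc c (b * (d*d)) (b * z) k3 a hk3 hak3'
    have hk4b : k4 = b := sing h3 d z b k4 hee hzz hez h1 hk4
    rw [hk4b] at hak4
    rwa [madd_comm] at hak4
  · rintro ⟨hh, hr⟩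
    refine ⟨hr, ?_⟩
    intro a
    have hcube : ∀ t : A, t * t * t = t := hr.2.1
    have hee : a * a * (a * a) = a * a := by rw [← mul_assoc, hcube]
    have h0 : (0 : A) ∈ madd ((a * a) * (a * a)) ((-1) * (a * a)) := by
      rw [hee, nmul, one_mul]
      exact zero_mem_madd_neg (a * a)
    obtain ⟨s, hs, hs0⟩ := hh 0 (a * a) (-1) (a * a) h0
    refine ⟨-s, ?_, ?_⟩
    · rw [mul_comm a (-s), nmul, mul_comm s a]
      have : a * s = 0 := by
        have h : a * a * s = 0 := by
          rw [mul_comm s (a*a)] at hs0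
          exact hs0.symm
        calc a * s = a * a * a * s := by rw [hcube]
          _ = a * (a * a * s) := by rw [mul_comm (a*a) a, mul_assoc]
          _ = 0 := by rw [h, mul_zero']
      rw [this, nzero]
    · have h := neg_mem hs
      rwa [nneg, madd_comm] at h

end MultiringProof


/-- A multiring is a real reduced multiring with complements (for each `a`
there is `x` with `ax = 0` and `x ∈ 1 + (-a²)`) iff it is a hyperring which is
a real reduced multiring. -/
theorem realReduced_with_complements_iff_hyperring {A : Type u} [Multiring A] :
    (Multiring.IsRealReduced A ∧
      ∀ a : A, ∃ x : A, a * x = 0 ∧ x ∈ Multiring.madd 1 (-(a * a))) ↔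
    (Multiring.IsHyperring A ∧ Multiring.IsRealReduced A) := by
  exact MultiringProof.main
end
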